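/- arXiv:0706.3338 — 3 statements merged into one kernel-verified Lean document; each statement's English description precedes it below -/
import Mathlib

section
/- (Lemma 1) Every M_H-group can be embedded into an M¹_H-group: if G = G(P) for an M_H-presentation P = ⟨x, H; R⟩, then there exist an M¹_H-presentation P̂ = ⟨x̂, H; R̂⟩ and an injective group homomorphism μ : G → G(P̂). Moreover μ can be chosen so that G is a retract of G(P̂) (there is ρ : G(P̂) → G with ρ ∘ μ = id_G) and μ ∘ ν = ν̂, where ν, ν̂ are the natural homomorphisms from H. -/
open Monoid

section Defs
variable {X Y H : Type*}

/-- `φ_W^θ(j)`: the sum `Σ_{i=1}^{j} ε_i θ(x_i)` of the weights of the first `j`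
letters of the word `W` (a word is a nonempty list of pairs (letter, exponent sign)). -/
def phiW (θ : X → ℤ) (W : List (X × Bool)) (j : ℕ) : ℤ :=
  ((W.take j).map fun p => if p.2 then θ p.1 else -θ p.1).sum

/-- A weight function: a map `θ : X → ℤ` whose image generates the additive group `ℤ`. -/
def IsWeightFun (θ : X → ℤ) : Prop :=
  AddSubgroup.closure (Set.range θ) = ⊤

/-- A strict weight function: `θ x ≠ 0` for all `x`. -/
def IsStrictWeight (θ : X → ℤ) : Prop := ∀ x, θ x ≠ 0

/-- `θ` is admissible for `W` if `φ(r) = 0` where `r` is the length of `W`. -/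
def IsAdmissible (θ : X → ℤ) (W : List (X × Bool)) : Prop :=
  phiW θ W W.length = 0

/-- The successor of an index, cyclically (subscripts mod `r`). -/
def succIdx (W : List (X × Bool)) (k : Fin W.length) : Fin W.length :=
  ⟨(k.1 + 1) % W.length, Nat.mod_lt _ k.pos⟩

/-- `W` has the unique max-min property with respect to the weight function `θ`:
`θ` is a strict weight function, admissible for `W`, the graph of `W` has a unique
maximum at `k` and a unique minimum at `l`, and `W` is reduced at the maximum and
minimum (`x_k ≠ x_{k+1}`, `x_l ≠ x_{l+1}`, subscripts mod `r`). -/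
def UniqueMaxMinWith (θ : X → ℤ) (W : List (X × Bool)) : Prop :=
  W ≠ [] ∧ IsWeightFun θ ∧ IsStrictWeight θ ∧ IsAdmissible θ W ∧
  ∃ k l : Fin W.length,
    (∀ j : Fin W.length, j ≠ k → phiW θ W (j.1 + 1) < phiW θ W (k.1 + 1)) ∧
    (∀ j : Fin W.length, j ≠ l → phiW θ W (l.1 + 1) < phiW θ W (j.1 + 1)) ∧
    (W.get k).1 ≠ (W.get (succIdx W k)).1 ∧
    (W.get l).1 ≠ (W.get (succIdx W l)).1

/-- `W` has the unique max-min property: it has it with respect to some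
admissible strict weight function. -/
def HasUniqueMaxMin (W : List (X × Bool)) : Prop :=
  ∃ θ : X → ℤ, UniqueMaxMinWith θ W

/-- The `x`-skeleton of a relator `R = x₁^{ε₁} h₁ ⋯ x_r^{ε_r} h_r`
(encoded as the list of triples `(xᵢ, εᵢ, hᵢ)`): the word `x₁^{ε₁} ⋯ x_r^{ε_r}`. -/
def skel (R : List (X × Bool × H)) : List (X × Bool) :=
  R.map fun t => (t.1, t.2.1)

variable [Group H]

/-- The element of the free product `H ∗ F(X)` represented by the relator
`R = x₁^{ε₁} h₁ ⋯ x_r^{ε_r} h_r`. -/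
def relWord (R : List (X × Bool × H)) : Coprod H (FreeGroup X) :=
  (R.map fun t => Coprod.inr (FreeGroup.mk [(t.1, t.2.1)]) * Coprod.inl t.2.2).prod

/-- The group `G(P)` defined by the relative one-relator presentation
`P = ⟨x, H; R⟩`: the quotient of `H ∗ F(X)` by the normal closure of `R`. -/
def relGroup (R : List (X × Bool × H)) : Type _ :=
  Coprod H (FreeGroup X) ⧸ Subgroup.normalClosure {relWord R}

instance (R : List (X × Bool × H)) : Group (relGroup R) :=
  QuotientGroup.Quotient.group _

/-- The natural homomorphism `ν : H → G(P)`. -/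
def natHom (R : List (X × Bool × H)) : H →* relGroup R :=
  (QuotientGroup.mk' _).comp Coprod.inl

end Defs

namespace PrideAux

variable {X : Type*}

/-- positive word `y_{x,0} ⋯ y_{x,n-1}` -/
def posW (θ : X → ℤ) (x : X) : List ((X × ℕ) × Bool) :=
  (List.range (θ x).natAbs).map fun i => ((x, i), true)

/-- expansion of the letter `x^ε` into weight-one letters -/
def ex (θ : X → ℤ) (p : X × Bool) : List ((X × ℕ) × Bool) :=
  if p.2 = decide (0 < θ p.1) then posW θ p.1 else FreeGroup.invRev (posW θ p.1)

/-- the common sign of the letters in `ex θ p` -/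
def sgn (θ : X → ℤ) (p : X × Bool) : ℤ :=
  if p.2 = decide (0 < θ p.1) then 1 else -1

lemma length_ex (θ : X → ℤ) (p : X × Bool) : (ex θ p).length = (θ p.1).natAbs := by
  unfold ex posW FreeGroup.invRev; split <;> simp

lemma mem_ex_fst (θ : X → ℤ) (p : X × Bool) : ∀ q ∈ ex θ p, q.1.1 = p.1 := by
  unfold ex posW FreeGroup.invRev
  split <;> intro q hq <;> simp at hq <;> obtain ⟨i, _, rfl⟩ := hq <;> rfl

lemma map_wt1_ex (θ : X → ℤ) (p : X × Bool) :
    (ex θ p).map (fun q => if q.2 then (1:ℤ) else -1)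
      = List.replicate (θ p.1).natAbs (sgn θ p) := by
  rw [List.eq_replicate_iff]
  constructor
  · rw [List.length_map, length_ex]
  · unfold ex sgn posW FreeGroup.invRev
    split <;> intro b hb <;> simp at hb <;> obtain ⟨i, _, rfl⟩ := hb <;> rfl

lemma sgn_mul_natAbs (θ : X → ℤ) (p : X × Bool) :
    sgn θ p * ((θ p.1).natAbs : ℤ) = (if p.2 then θ p.1 else -θ p.1) := by
  unfold sgn
  rcases p with ⟨x, b⟩
  have habs : ((θ x).natAbs : ℤ) = |θ x| := Int.abs_eq_natAbs _ |>.symm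
  by_cases h : 0 < θ x <;> cases b <;> simp [h, habs] <;>
    first
    | omega
    | (rw [abs_of_nonneg (by omega)]; ring)
    | (rw [abs_of_nonpos (by omega)]; ring)

/-- position of the end of the `j`-th block -/
def Nf (θ : X → ℤ) (W : List (X × Bool)) (j : ℕ) : ℕ :=
  ((W.take j).map fun p => (θ p.1).natAbs).sum

lemma Nf_zero (θ : X → ℤ) (W : List (X × Bool)) : Nf θ W 0 = 0 := by simp [Nf]

lemma length_flatMap_ex (θ : X → ℤ) (V : List (X × Bool)) :
    (V.flatMap (ex θ)).length = (V.map fun p => (θ p.1).natAbs).sum := by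
  rw [List.length_flatMap]
  congr 1
  exact List.map_congr_left fun p _ => length_ex θ p

lemma take_bind (θ : X → ℤ) (W : List (X × Bool)) (j : ℕ) :
    (W.flatMap (ex θ)).take (Nf θ W j) = (W.take j).flatMap (ex θ) := by
  have hW : W.flatMap (ex θ) = (W.take j).flatMap (ex θ) ++ (W.drop j).flatMap (ex θ) := by
    rw [← List.flatMap_append, List.take_append_drop]
  rw [hW, List.take_append]
  have h1 : ((W.take j).flatMap (ex θ)).length = Nf θ W j := length_flatMap_ex θ _
  rw [List.take_of_length_le (le_of_eq h1), h1, Nat.sub_self, List.take_zero, List.append_nil]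

lemma sum_flatMap (θ : X → ℤ) (V : List (X × Bool)) :
    ((V.flatMap (ex θ)).map (fun q => if q.2 then (1:ℤ) else -1)).sum
      = (V.map fun p => if p.2 then θ p.1 else -θ p.1).sum := by
  induction V with
  | nil => simp
  | cons p V ih =>
    rw [List.flatMap_cons, List.map_append, List.sum_append, ih, map_wt1_ex,
      List.sum_replicate, List.map_cons, List.sum_cons]
    congr 1
    rw [← sgn_mul_natAbs θ p]
    simp [mul_comm]

lemma phi_boundary (θ : X → ℤ) (W : List (X × Bool)) (j : ℕ) :
    phiW (fun _ => (1:ℤ)) (W.flatMap (ex θ)) (Nf θ W j) = phiW θ W j := by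
  unfold phiW
  rw [take_bind]
  exact sum_flatMap θ _

lemma Nf_succ (θ : X → ℤ) (W : List (X × Bool)) (j : ℕ) (hj : j < W.length) :
    Nf θ W (j+1) = Nf θ W j + (θ (W.get ⟨j, hj⟩).1).natAbs := by
  unfold Nf
  rw [List.take_succ, List.getElem?_eq_getElem hj, List.map_append, List.sum_append]
  simp

lemma decomp (θ : X → ℤ) (W : List (X × Bool)) (j : ℕ) (hj : j < W.length) :
    W.flatMap (ex θ) = (W.take j).flatMap (ex θ)
      ++ (ex θ (W.get ⟨j, hj⟩) ++ (W.drop (j+1)).flatMap (ex θ)) := by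
  conv_lhs => rw [← List.take_append_drop j W, List.drop_eq_getElem_cons hj,
    List.flatMap_append, List.flatMap_cons]
  rfl

lemma phi_mid (θ : X → ℤ) (W : List (X × Bool)) (j d : ℕ) (hj : j < W.length)
    (hd : d ≤ (θ (W.get ⟨j, hj⟩).1).natAbs) :
    phiW (fun _ => (1:ℤ)) (W.flatMap (ex θ)) (Nf θ W j + d)
      = phiW θ W j + sgn θ (W.get ⟨j, hj⟩) * d := by
  unfold phiW
  rw [decomp θ W j hj, List.take_append]
  have h1 : ((W.take j).flatMap (ex θ)).length = Nf θ W j := length_flatMap_ex θ _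
  rw [List.take_of_length_le (by omega), h1, Nat.add_sub_cancel_left,
    List.take_append, length_ex,
    Nat.sub_eq_zero_of_le hd, List.take_zero, List.append_nil,
    List.map_append, List.sum_append, List.map_take, map_wt1_ex, List.take_replicate,
    List.sum_replicate, min_eq_left hd]
  have := sum_flatMap θ (W.take j)
  rw [this]
  congr 1
  push_cast
  ring

lemma natAbs_pos (θ : X → ℤ) (hs : IsStrictWeight θ) (x : X) : 0 < (θ x).natAbs :=
  Int.natAbs_pos.mpr (hs x)

lemma Nf_add_le (θ : X → ℤ) (W : List (X × Bool)) (hs : IsStrictWeight θ) :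
    ∀ t j, j + t ≤ W.length → Nf θ W j + t ≤ Nf θ W (j + t) := by
  intro t
  induction t with
  | zero => intro j _; simp
  | succ t ih =>
    intro j h
    have h1 : j + t < W.length := by omega
    have h2 := ih j (by omega)
    have h3 := Nf_succ θ W (j+t) h1
    have h4 := natAbs_pos θ hs (W.get ⟨j+t, h1⟩).1
    have h5 : Nf θ W (j + (t+1)) = Nf θ W ((j+t)+1) := rfl
    omega

lemma block_find (θ : X → ℤ) (W : List (X × Bool)) :
    ∀ t, t ≤ W.length → ∀ m, m < Nf θ W t →
    ∃ j, ∃ hj : j < W.length, ∃ d, d < (θ (W.get ⟨j, hj⟩).1).natAbs ∧ m = Nf θ W j + d := by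
  intro t
  induction t with
  | zero => intro _ m hm; rw [Nf_zero] at hm; omega
  | succ t ih =>
    intro ht m hm
    by_cases h : m < Nf θ W t
    · exact ih (by omega) m h
    · have h1 : t < W.length := by
        by_contra hc
        have : W.take (t+1) = W.take t := by
          rw [List.take_of_length_le (by omega), List.take_of_length_le (by omega)]
        unfold Nf at hm h
        rw [this] at hm
        omega
      refine ⟨t, h1, m - Nf θ W t, ?_, by omega⟩
      have := Nf_succ θ W t h1
      omega





lemma get_block (θ : X → ℤ) (W : List (X × Bool)) (j d : ℕ) (hj : j < W.length)
    (hd : d < (θ (W.get ⟨j, hj⟩).1).natAbs)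
    (hpos : Nf θ W j + d < (W.flatMap (ex θ)).length) :
    ((W.flatMap (ex θ)).get ⟨Nf θ W j + d, hpos⟩).1.1 = (W.get ⟨j, hj⟩).1 := by
  have h1 : ((W.take j).flatMap (ex θ)).length = Nf θ W j := length_flatMap_ex θ _
  have hd' : d < (ex θ (W.get ⟨j, hj⟩)).length := by rw [length_ex]; exact hd
  have hget : (W.flatMap (ex θ)).get ⟨Nf θ W j + d, hpos⟩ ∈ ex θ (W.get ⟨j, hj⟩) := by
    show (W.flatMap (ex θ))[Nf θ W j + d]'hpos ∈ ex θ (W.get ⟨j, hj⟩)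
    rw [List.getElem_of_eq (decomp θ W j hj) hpos,
      List.getElem_append_right (by omega), List.getElem_append_left (by omega)]
    exact List.getElem_mem _
  exact mem_ex_fst θ _ _ hget

theorem key (θ : X → ℤ) (W : List (X × Bool)) (h : UniqueMaxMinWith θ W) :
    UniqueMaxMinWith (fun _ => (1:ℤ)) (W.flatMap (ex θ)) := by
  obtain ⟨hne, _hwf, hs, hadm, k, l, hk, hl, hkred, hlred⟩ := h
  set W' := W.flatMap (ex θ) with hW'def
  have hrpos : 0 < W.length := List.length_pos_iff.mpr hne
  have hNle : ∀ j, j ≤ W.length → Nf θ W j + (W.length - j) ≤ Nf θ W W.length := by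
    intro j hj
    have := Nf_add_le θ W hs (W.length - j) j (by omega)
    rwa [show j + (W.length - j) = W.length by omega] at this
  have hlen : W'.length = Nf θ W W.length := by
    rw [hW'def, length_flatMap_ex]; simp [Nf]
  have hlenpos : 0 < W'.length := by
    have := hNle 0 (by omega)
    rw [Nf_zero] at this
    omega
  -- boundary values
  have hb : ∀ j, phiW (fun _ => (1:ℤ)) W' (Nf θ W j) = phiW θ W j := phi_boundary θ W
  have hphi0 : phiW θ W 0 = 0 := by simp [phiW]
  -- step relation
  have hstep : ∀ j (hj : j < W.length),
      phiW θ W (j+1) = phiW θ W j + sgn θ (W.get ⟨j, hj⟩) * (θ (W.get ⟨j, hj⟩).1).natAbs := by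
    intro j hj
    have h1 := phi_mid θ W j (θ (W.get ⟨j, hj⟩).1).natAbs hj le_rfl
    rw [← Nf_succ θ W j hj] at h1
    rw [← hb (j+1), h1]
  -- unique max helper
  have hkle : ∀ i, i ≤ W.length → phiW θ W i ≤ phiW θ W (k.1 + 1) := by
    have hk1 : ∀ i (hi : i < W.length), phiW θ W (i+1) ≤ phiW θ W (k.1+1) := by
      intro i hi
      by_cases hik : (⟨i, hi⟩ : Fin W.length) = k
      · rw [show i = k.1 from congrArg Fin.val hik]
      · exact le_of_lt (hk ⟨i, hi⟩ hik)
    intro i hi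
    rcases i with _ | i
    · rw [hphi0, ← hadm]
      have h3 : W.length = (W.length - 1) + 1 := by omega
      have h2 := hk1 (W.length - 1) (by omega)
      rwa [← h3] at h2
    · exact hk1 i (by omega)
  have hlle : ∀ i, i ≤ W.length → phiW θ W (l.1 + 1) ≤ phiW θ W i := by
    have hl1 : ∀ i (hi : i < W.length), phiW θ W (l.1+1) ≤ phiW θ W (i+1) := by
      intro i hi
      by_cases hil : (⟨i, hi⟩ : Fin W.length) = l
      · rw [show i = l.1 from congrArg Fin.val hil]
      · exact le_of_lt (hl ⟨i, hi⟩ hil)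
    intro i hi
    rcases i with _ | i
    · rw [hphi0, ← hadm]
      have h3 : W.length = (W.length - 1) + 1 := by omega
      have h2 := hl1 (W.length - 1) (by omega)
      rwa [← h3] at h2
    · exact hl1 i (by omega)
  -- sgn is ±1
  have hsgn : ∀ p, sgn θ p = 1 ∨ sgn θ p = -1 := by
    intro p; unfold sgn; split <;> simp
  -- new max/min indices
  have hNk1 : 1 ≤ Nf θ W (k.1+1) ∧ Nf θ W (k.1+1) ≤ W'.length := by
    constructor
    · have := Nf_succ θ W k.1 k.2
      have := natAbs_pos θ hs (W.get k).1
      simp only [Fin.eta] at *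
      omega
    · rw [hlen]
      have := hNle (k.1+1) (by omega)
      omega
  have hNl1 : 1 ≤ Nf θ W (l.1+1) ∧ Nf θ W (l.1+1) ≤ W'.length := by
    constructor
    · have := Nf_succ θ W l.1 l.2
      have := natAbs_pos θ hs (W.get l).1
      simp only [Fin.eta] at *
      omega
    · rw [hlen]
      have := hNle (l.1+1) (by omega)
      omega
  refine ⟨by rw [← List.length_pos_iff]; exact hlenpos, ?_, fun _ => one_ne_zero, ?_, ?_⟩
  · -- weight fun
    rw [IsWeightFun, eq_top_iff]
    intro n _
    have hx : X × ℕ := (W'.get ⟨0, hlenpos⟩).1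
    have h1 : (1:ℤ) ∈ AddSubgroup.closure (Set.range fun (_ : X × ℕ) => (1:ℤ)) :=
      AddSubgroup.subset_closure ⟨hx, rfl⟩
    have h2 := AddSubgroup.zsmul_mem _ h1 n
    simpa using h2
  · -- admissible
    rw [IsAdmissible, hlen, hb, hadm]
  · -- max and min
    refine ⟨⟨Nf θ W (k.1+1) - 1, by omega⟩, ⟨Nf θ W (l.1+1) - 1, by omega⟩, ?_, ?_, ?_, ?_⟩
    · -- unique max
      intro j' hj'
      have hm1 : (Nf θ W (k.1+1) - 1) + 1 = Nf θ W (k.1+1) := by omega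
      rw [hm1, hb]
      -- find block for j'.1
      obtain ⟨j, hj, d, hd, hjd⟩ := block_find θ W W.length le_rfl j'.1 (by rw [← hlen]; exact j'.2)
      have hphi := phi_mid θ W j (d+1) hj (by omega)
      rw [show Nf θ W j + (d+1) = j'.1 + 1 by omega] at hphi
      push_cast at hphi
      rw [hphi]
      by_cases hdn : d + 1 = (θ (W.get ⟨j, hj⟩).1).natAbs
      · -- endpoint: value is phi (j+1)
        have hval : phiW θ W j + sgn θ (W.get ⟨j, hj⟩) * ((d:ℤ)+1) = phiW θ W (j+1) := by
          rw [hstep j hj, ← hdn]; push_cast; ring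
        rw [hval]
        by_cases hjk : (⟨j, hj⟩ : Fin W.length) = k
        · exfalso
          apply hj'
          have hje : j = k.1 := congrArg Fin.val hjk
          subst hje
          have hsucc : Nf θ W (k.1+1) = Nf θ W k.1 + (θ (W.get ⟨k.1, hj⟩).1).natAbs :=
            Nf_succ θ W k.1 hj
          refine Fin.ext ?_
          simp only [Fin.val_mk]
          omega
        · exact hk ⟨j, hj⟩ hjk
      · -- interior point
        rcases hsgn (W.get ⟨j, hj⟩) with hpos | hneg
        · have h2 : phiW θ W j + sgn θ (W.get ⟨j, hj⟩) * ((d:ℤ)+1) < phiW θ W (j+1) := by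
            rw [hstep j hj, hpos]
            have : (d:ℤ) + 1 < ((θ (W.get ⟨j, hj⟩).1).natAbs : ℤ) := by exact_mod_cast by omega
            omega
          exact lt_of_lt_of_le h2 (hkle (j+1) (by omega))
        · have h2 : phiW θ W j + sgn θ (W.get ⟨j, hj⟩) * ((d:ℤ)+1) < phiW θ W j := by
            rw [hneg]
            have : (0:ℤ) < (d:ℤ) + 1 := by positivity
            omega
          exact lt_of_lt_of_le h2 (hkle j (by omega))
    · -- unique min
      intro j' hj'
      have hm1 : (Nf θ W (l.1+1) - 1) + 1 = Nf θ W (l.1+1) := by omega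
      rw [hm1, hb]
      obtain ⟨j, hj, d, hd, hjd⟩ := block_find θ W W.length le_rfl j'.1 (by rw [← hlen]; exact j'.2)
      have hphi := phi_mid θ W j (d+1) hj (by omega)
      rw [show Nf θ W j + (d+1) = j'.1 + 1 by omega] at hphi
      push_cast at hphi
      rw [hphi]
      by_cases hdn : d + 1 = (θ (W.get ⟨j, hj⟩).1).natAbs
      · have hval : phiW θ W j + sgn θ (W.get ⟨j, hj⟩) * ((d:ℤ)+1) = phiW θ W (j+1) := by
          rw [hstep j hj, ← hdn]; push_cast; ring
        rw [hval]
        by_cases hjl : (⟨j, hj⟩ : Fin W.length) = l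
        · exfalso
          apply hj'
          have hje : j = l.1 := congrArg Fin.val hjl
          subst hje
          have hsucc : Nf θ W (l.1+1) = Nf θ W l.1 + (θ (W.get ⟨l.1, hj⟩).1).natAbs :=
            Nf_succ θ W l.1 hj
          refine Fin.ext ?_
          simp only [Fin.val_mk]
          omega
        · exact hl ⟨j, hj⟩ hjl
      · rcases hsgn (W.get ⟨j, hj⟩) with hpos | hneg
        · have h2 : phiW θ W j < phiW θ W j + sgn θ (W.get ⟨j, hj⟩) * ((d:ℤ)+1) := by
            rw [hpos]
            have : (0:ℤ) < (d:ℤ) + 1 := by positivity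
            omega
          exact lt_of_le_of_lt (hlle j (by omega)) h2
        · have h2 : phiW θ W (j+1) < phiW θ W j + sgn θ (W.get ⟨j, hj⟩) * ((d:ℤ)+1) := by
            rw [hstep j hj, hneg]
            have : (d:ℤ) + 1 < ((θ (W.get ⟨j, hj⟩).1).natAbs : ℤ) := by exact_mod_cast by omega
            omega
          exact lt_of_le_of_lt (hlle (j+1) (by omega)) h2
    · -- reduced at k
      have hgb := fun (j d : ℕ) (hj : j < W.length) (hd : d < (θ (W.get ⟨j,hj⟩).1).natAbs)
        (hpos : Nf θ W j + d < W'.length) => get_block θ W j d hj hd hpos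
      have hsucc : Nf θ W (k.1+1) = Nf θ W k.1 + (θ (W.get ⟨k.1, k.2⟩).1).natAbs :=
        Nf_succ θ W k.1 k.2
      have hnkpos := natAbs_pos θ hs (W.get ⟨k.1, k.2⟩).1
      have hidx : (⟨Nf θ W (k.1+1) - 1, by omega⟩ : Fin W'.length)
          = ⟨Nf θ W k.1 + ((θ (W.get ⟨k.1, k.2⟩).1).natAbs - 1), by omega⟩ :=
        Fin.ext (by simp only [Fin.val_mk]; omega)
      have e1 : (W'.get ⟨Nf θ W (k.1+1) - 1, by omega⟩).1.1 = (W.get k).1 := by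
        rw [hidx, hgb k.1 _ k.2 (by omega)]
      intro heq
      apply hkred
      have hfst := congrArg Prod.fst heq
      rw [e1] at hfst
      by_cases hcase : k.1 + 1 < W.length
      · have hmlt : Nf θ W (k.1+1) < W'.length := by
          have := hNle (k.1+1) (by omega)
          omega
        have hfin : succIdx W' ⟨Nf θ W (k.1+1) - 1, by omega⟩
            = ⟨Nf θ W (k.1+1) + 0, by omega⟩ := by
          apply Fin.ext
          show (Nf θ W (k.1+1) - 1 + 1) % W'.length = Nf θ W (k.1+1) + 0
          rw [show Nf θ W (k.1+1) - 1 + 1 = Nf θ W (k.1+1) by omega,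
            Nat.mod_eq_of_lt hmlt]
          omega
        have e2 : (W'.get (succIdx W' ⟨Nf θ W (k.1+1) - 1, by omega⟩)).1.1
            = (W.get ⟨k.1+1, hcase⟩).1 := by
          rw [hfin, hgb (k.1+1) 0 hcase (natAbs_pos θ hs _)]
        rw [e2] at hfst
        have hfin2 : succIdx W k = ⟨k.1+1, hcase⟩ :=
          Fin.ext (by show (k.1+1) % W.length = k.1+1; exact Nat.mod_eq_of_lt hcase)
        rw [hfin2]
        exact hfst
      · have hend : k.1 + 1 = W.length := by have := k.2; omega
        have hmeq : Nf θ W (k.1+1) = W'.length := by rw [hend, ← hlen]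
        have hfin : succIdx W' ⟨Nf θ W (k.1+1) - 1, by omega⟩
            = ⟨Nf θ W 0 + 0, by rw [Nf_zero]; omega⟩ := by
          apply Fin.ext
          show (Nf θ W (k.1+1) - 1 + 1) % W'.length = Nf θ W 0 + 0
          rw [show Nf θ W (k.1+1) - 1 + 1 = W'.length by omega, Nat.mod_self, Nf_zero]
        have e2 : (W'.get (succIdx W' ⟨Nf θ W (k.1+1) - 1, by omega⟩)).1.1
            = (W.get ⟨0, hrpos⟩).1 := by
          rw [hfin, hgb 0 0 hrpos (natAbs_pos θ hs _)]
        rw [e2] at hfst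
        have hfin2 : succIdx W k = ⟨0, hrpos⟩ :=
          Fin.ext (by show (k.1+1) % W.length = 0; rw [hend, Nat.mod_self])
        rw [hfin2]
        exact hfst
    · -- reduced at l
      have hgb := fun (j d : ℕ) (hj : j < W.length) (hd : d < (θ (W.get ⟨j,hj⟩).1).natAbs)
        (hpos : Nf θ W j + d < W'.length) => get_block θ W j d hj hd hpos
      have hsucc : Nf θ W (l.1+1) = Nf θ W l.1 + (θ (W.get ⟨l.1, l.2⟩).1).natAbs :=
        Nf_succ θ W l.1 l.2
      have hnlpos := natAbs_pos θ hs (W.get ⟨l.1, l.2⟩).1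
      have hidx : (⟨Nf θ W (l.1+1) - 1, by omega⟩ : Fin W'.length)
          = ⟨Nf θ W l.1 + ((θ (W.get ⟨l.1, l.2⟩).1).natAbs - 1), by omega⟩ :=
        Fin.ext (by simp only [Fin.val_mk]; omega)
      have e1 : (W'.get ⟨Nf θ W (l.1+1) - 1, by omega⟩).1.1 = (W.get l).1 := by
        rw [hidx, hgb l.1 _ l.2 (by omega)]
      intro heq
      apply hlred
      have hfst := congrArg Prod.fst heq
      rw [e1] at hfst
      by_cases hcase : l.1 + 1 < W.length
      · have hmlt : Nf θ W (l.1+1) < W'.length := by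
          have := hNle (l.1+1) (by omega)
          omega
        have hfin : succIdx W' ⟨Nf θ W (l.1+1) - 1, by omega⟩
            = ⟨Nf θ W (l.1+1) + 0, by omega⟩ := by
          apply Fin.ext
          show (Nf θ W (l.1+1) - 1 + 1) % W'.length = Nf θ W (l.1+1) + 0
          rw [show Nf θ W (l.1+1) - 1 + 1 = Nf θ W (l.1+1) by omega,
            Nat.mod_eq_of_lt hmlt]
          omega
        have e2 : (W'.get (succIdx W' ⟨Nf θ W (l.1+1) - 1, by omega⟩)).1.1
            = (W.get ⟨l.1+1, hcase⟩).1 := by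
          rw [hfin, hgb (l.1+1) 0 hcase (natAbs_pos θ hs _)]
        rw [e2] at hfst
        have hfin2 : succIdx W l = ⟨l.1+1, hcase⟩ :=
          Fin.ext (by show (l.1+1) % W.length = l.1+1; exact Nat.mod_eq_of_lt hcase)
        rw [hfin2]
        exact hfst
      · have hend : l.1 + 1 = W.length := by have := l.2; omega
        have hmeq : Nf θ W (l.1+1) = W'.length := by rw [hend, ← hlen]
        have hfin : succIdx W' ⟨Nf θ W (l.1+1) - 1, by omega⟩
            = ⟨Nf θ W 0 + 0, by rw [Nf_zero]; omega⟩ := by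
          apply Fin.ext
          show (Nf θ W (l.1+1) - 1 + 1) % W'.length = Nf θ W 0 + 0
          rw [show Nf θ W (l.1+1) - 1 + 1 = W'.length by omega, Nat.mod_self, Nf_zero]
        have e2 : (W'.get (succIdx W' ⟨Nf θ W (l.1+1) - 1, by omega⟩)).1.1
            = (W.get ⟨0, hrpos⟩).1 := by
          rw [hfin, hgb 0 0 hrpos (natAbs_pos θ hs _)]
        rw [e2] at hfst
        have hfin2 : succIdx W l = ⟨0, hrpos⟩ :=
          Fin.ext (by show (l.1+1) % W.length = 0; rw [hend, Nat.mod_self])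
        rw [hfin2]
        exact hfst


end PrideAux

section GroupAux
namespace PrideAux

variable {X : Type*} {H : Type*} [Group H]

/-- attach `h` to the last letter of a word, `1` elsewhere -/
def withH (H : Type*) [Group H] : List ((X × ℕ) × Bool) → H → List ((X × ℕ) × Bool × H)
  | [], _ => []
  | [p], h => [(p.1, p.2, h)]
  | p :: q :: L, h => (p.1, p.2, 1) :: withH H (q :: L) h

lemma skel_withH (L : List ((X × ℕ) × Bool)) (h : H) :
    (withH H L h).map (fun t => (t.1, t.2.1)) = L := by
  induction L with
  | nil => rfl
  | cons p L ih =>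
    cases L with
    | nil => simp [withH]
    | cons q M =>
      rw [show withH H (p :: q :: M) h = (p.1, p.2, 1) :: withH H (q :: M) h from rfl,
        List.map_cons, ih]

lemma relWord_cons (t : X × Bool × H) (R : List (X × Bool × H)) :
    relWord (t :: R)
      = Coprod.inr (FreeGroup.mk [(t.1, t.2.1)]) * Coprod.inl t.2.2 * relWord R := by
  simp [relWord, mul_assoc]

lemma relWord_append (A B : List (X × Bool × H)) :
    relWord (A ++ B) = relWord A * relWord B := by
  simp [relWord]

lemma relWord_withH (L : List ((X × ℕ) × Bool)) (hL : L ≠ []) (h : H) :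
    relWord (withH H L h) = Coprod.inr (FreeGroup.mk L) * Coprod.inl h := by
  induction L with
  | nil => exact absurd rfl hL
  | cons p L ih =>
    cases L with
    | nil =>
      show relWord [(p.1, p.2, h)] = _
      simp [relWord]
    | cons q M =>
      show relWord ((p.1, p.2, (1:H)) :: withH H (q :: M) h) = _
      rw [relWord_cons, ih (List.cons_ne_nil q M)]
      simp only [map_one, mul_one]
      rw [← mul_assoc, ← map_mul, FreeGroup.mul_mk]
      simp

/-- the substitution homomorphism on the free group -/
def muF (θ : X → ℤ) : FreeGroup X →* FreeGroup (X × ℕ) :=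
  FreeGroup.lift fun x =>
    if 0 < θ x then FreeGroup.mk (posW θ x) else (FreeGroup.mk (posW θ x))⁻¹

lemma muF_letter (θ : X → ℤ) (x : X) (ε : Bool) :
    muF θ (FreeGroup.mk [(x, ε)]) = FreeGroup.mk (ex θ (x, ε)) := by
  cases ε
  · have h1 : FreeGroup.mk [((x, false) : X × Bool)] = (FreeGroup.of x)⁻¹ := by
      rw [show FreeGroup.of x = FreeGroup.mk [(x, true)] from rfl, FreeGroup.inv_mk]
      rfl
    rw [h1, map_inv, muF, FreeGroup.lift_apply_of]
    by_cases h : 0 < θ x <;> simp only [h, if_pos, if_neg, ite_true, ite_false, inv_inv] <;>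
      unfold ex <;> simp [h, FreeGroup.inv_mk]
  · have h1 : FreeGroup.mk [((x, true) : X × Bool)] = FreeGroup.of x := rfl
    rw [h1, muF, FreeGroup.lift_apply_of]
    by_cases h : 0 < θ x <;>
      unfold ex <;> simp [h, FreeGroup.inv_mk]

/-- the retraction homomorphism on the free group -/
def rhoF (θ : X → ℤ) : FreeGroup (X × ℕ) →* FreeGroup X :=
  FreeGroup.lift fun y =>
    if y.2 = 0 then (if 0 < θ y.1 then FreeGroup.of y.1 else (FreeGroup.of y.1)⁻¹) else 1

lemma rhoF_posW (θ : X → ℤ) (hs : IsStrictWeight θ) (x : X) :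
    rhoF θ (FreeGroup.mk (posW θ x))
      = if 0 < θ x then FreeGroup.of x else (FreeGroup.of x)⁻¹ := by
  obtain ⟨m, hm⟩ : ∃ m, (θ x).natAbs = m + 1 :=
    ⟨(θ x).natAbs - 1, by have := natAbs_pos θ hs x; omega⟩
  have htail : rhoF θ (FreeGroup.mk ((List.range m).map fun i => (((x, i+1) : X × ℕ), true)))
      = 1 := by
    rw [rhoF, FreeGroup.lift_mk]
    apply List.prod_eq_one
    intro a ha
    simp only [List.map_map, List.mem_map, Function.comp] at ha
    obtain ⟨i, _, rfl⟩ := ha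
    simp
  have hsplit : FreeGroup.mk (posW θ x)
      = FreeGroup.of ((x, 0) : X × ℕ)
        * FreeGroup.mk ((List.range m).map fun i => (((x, i+1) : X × ℕ), true)) := by
    rw [show FreeGroup.of ((x,0) : X × ℕ) = FreeGroup.mk [((x,0), true)] from rfl,
      FreeGroup.mul_mk]
    unfold posW
    rw [hm, List.range_succ_eq_map]
    simp only [List.map_cons, List.map_map]
    congr 1
  rw [hsplit, map_mul, htail, mul_one, rhoF, FreeGroup.lift_apply_of]
  simp

lemma rho_mu (θ : X → ℤ) (hs : IsStrictWeight θ) :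
    (rhoF θ).comp (muF θ) = MonoidHom.id (FreeGroup X) := by
  apply FreeGroup.ext_hom
  intro x
  rw [MonoidHom.comp_apply, MonoidHom.id_apply, muF, FreeGroup.lift_apply_of]
  by_cases h : 0 < θ x
  · rw [if_pos h, rhoF_posW θ hs, if_pos h]
  · rw [if_neg h, map_inv, rhoF_posW θ hs, if_neg h, inv_inv]


/-- the induced map on free products -/
def Phi (θ : X → ℤ) (H : Type*) [Group H] :
    Coprod H (FreeGroup X) →* Coprod H (FreeGroup (X × ℕ)) :=
  Coprod.lift Coprod.inl (Coprod.inr.comp (muF θ))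

/-- the induced retraction on free products -/
def Psi (θ : X → ℤ) (H : Type*) [Group H] :
    Coprod H (FreeGroup (X × ℕ)) →* Coprod H (FreeGroup X) :=
  Coprod.lift Coprod.inl (Coprod.inr.comp (rhoF θ))

lemma Phi_inl (θ : X → ℤ) (h : H) : Phi θ H (Coprod.inl h) = Coprod.inl h := by
  rw [Phi, Coprod.lift_apply_inl]

lemma Phi_relWord (θ : X → ℤ) (hs : IsStrictWeight θ) (R : List (X × Bool × H)) :
    Phi θ H (relWord R)
      = relWord (R.flatMap fun t => withH H (ex θ (t.1, t.2.1)) t.2.2) := by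
  induction R with
  | nil => simp [relWord]
  | cons t R ih =>
    rw [relWord_cons, List.flatMap_cons, relWord_append, map_mul, map_mul, ih]
    congr 1
    rw [relWord_withH _ (by rw [← List.length_pos_iff, length_ex]; exact natAbs_pos θ hs _) _]
    have h1 : Phi θ H (Coprod.inr (FreeGroup.mk [(t.1, t.2.1)]))
        = Coprod.inr (FreeGroup.mk (ex θ (t.1, t.2.1))) := by
      rw [Phi, Coprod.lift_apply_inr, MonoidHom.comp_apply, muF_letter]
    rw [h1, Phi_inl]

lemma Psi_Phi (θ : X → ℤ) (hs : IsStrictWeight θ) :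
    (Psi θ H).comp (Phi θ H) = MonoidHom.id (Coprod H (FreeGroup X)) := by
  apply Coprod.hom_ext
  · apply MonoidHom.ext; intro h
    simp [Phi, Psi, Coprod.lift_apply_inl]
  · apply MonoidHom.ext; intro g
    simp only [MonoidHom.comp_apply, MonoidHom.id_apply]
    rw [Phi, Coprod.lift_apply_inr, MonoidHom.comp_apply, Psi, Coprod.lift_apply_inr,
      MonoidHom.comp_apply]
    exact congrArg Coprod.inr (DFunLike.congr_fun (rho_mu θ hs) g)

end PrideAux
end GroupAux

universe u v

/-- **Lemma 1** (Pride). Every `M_H`-group embeds into an `M¹_H`-group: if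
`G = G(P)` for an `M_H`-presentation `P = ⟨x, H; R⟩`, then there is a presentation
`P̂ = ⟨x̂, H; R̂⟩` whose skeleton has the unique max-min property with respect to the
constant weight function `1`, together with an injective homomorphism
`μ : G → G(P̂)` which has a retraction `ρ` and satisfies `μ ∘ ν = ν̂`. -/
theorem exists_M1_embedding {X : Type u} {H : Type v} [Group H]
    (R : List (X × Bool × H)) (hP : HasUniqueMaxMin (skel R)) :
    ∃ (X' : Type u) (R' : List (X' × Bool × H)),
      UniqueMaxMinWith (fun _ => (1 : ℤ)) (skel R') ∧
      ∃ (μ : relGroup R →* relGroup R') (ρ : relGroup R' →* relGroup R),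
        Function.Injective μ ∧
        ρ.comp μ = MonoidHom.id (relGroup R) ∧
        μ.comp (natHom R) = natHom R' := by
  obtain ⟨θ, hU⟩ := hP
  have hs : IsStrictWeight θ := hU.2.2.1
  refine ⟨X × ℕ, R.flatMap fun t => PrideAux.withH H (PrideAux.ex θ (t.1, t.2.1)) t.2.2, ?_, ?_⟩
  · have hskel : skel (R.flatMap fun t => PrideAux.withH H (PrideAux.ex θ (t.1, t.2.1)) t.2.2)
        = (skel R).flatMap (PrideAux.ex θ) := by
      unfold skel
      rw [List.map_flatMap, List.flatMap_map]
      exact congrArg (fun f => List.flatMap f R) (funext fun t => PrideAux.skel_withH (H := H) (PrideAux.ex θ (t.1, t.2.1)) t.2.2)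
    rw [hskel]
    exact PrideAux.key θ (skel R) hU
  · set R' := R.flatMap fun t => PrideAux.withH H (PrideAux.ex θ (t.1, t.2.1)) t.2.2 with hR'
    have hPhiR : PrideAux.Phi θ H (relWord R) = relWord R' := PrideAux.Phi_relWord θ hs R
    have hPsiR' : PrideAux.Psi θ H (relWord R') = relWord R := by
      rw [← hPhiR, ← MonoidHom.comp_apply, PrideAux.Psi_Phi θ hs, MonoidHom.id_apply]
    have hle1 : Subgroup.normalClosure {relWord R} ≤
        Subgroup.comap (PrideAux.Phi θ H) (Subgroup.normalClosure {relWord R'}) := by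
      haveI := Subgroup.Normal.comap
        (Subgroup.normalClosure_normal (s := {relWord R'})) (PrideAux.Phi θ H)
      apply Subgroup.normalClosure_le_normal
      intro g hg
      rw [Set.mem_singleton_iff] at hg
      subst hg
      show PrideAux.Phi θ H (relWord R) ∈ Subgroup.normalClosure {relWord R'}
      rw [hPhiR]
      exact Subgroup.subset_normalClosure rfl
    have hle2 : Subgroup.normalClosure {relWord R'} ≤
        Subgroup.comap (PrideAux.Psi θ H) (Subgroup.normalClosure {relWord R}) := by
      haveI := Subgroup.Normal.comap
        (Subgroup.normalClosure_normal (s := {relWord R})) (PrideAux.Psi θ H)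
      apply Subgroup.normalClosure_le_normal
      intro g hg
      rw [Set.mem_singleton_iff] at hg
      subst hg
      show PrideAux.Psi θ H (relWord R') ∈ Subgroup.normalClosure {relWord R}
      rw [hPsiR']
      exact Subgroup.subset_normalClosure rfl
    have hretr : (QuotientGroup.map _ _ (PrideAux.Psi θ H) hle2).comp
        (QuotientGroup.map _ _ (PrideAux.Phi θ H) hle1)
        = MonoidHom.id (relGroup R) := by
      apply QuotientGroup.monoidHom_ext
      apply MonoidHom.ext
      intro g
      simp only [MonoidHom.comp_apply]
      rw [QuotientGroup.map_mk', QuotientGroup.map_mk]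
      rw [show PrideAux.Psi θ H (PrideAux.Phi θ H g) = g from
        DFunLike.congr_fun (PrideAux.Psi_Phi θ hs) g]
      rfl
    refine ⟨QuotientGroup.map _ _ (PrideAux.Phi θ H) hle1,
      QuotientGroup.map _ _ (PrideAux.Psi θ H) hle2, ?_, hretr, ?_⟩
    · have hli : Function.LeftInverse
          ⇑(QuotientGroup.map _ _ (PrideAux.Psi θ H) hle2)
          ⇑(QuotientGroup.map _ _ (PrideAux.Phi θ H) hle1) := fun a =>
        DFunLike.congr_fun hretr a
      exact hli.injective
    · apply MonoidHom.ext
      intro h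
      show QuotientGroup.map _ _ (PrideAux.Phi θ H) hle1
          ((QuotientGroup.mk' _) (Coprod.inl h)) = (QuotientGroup.mk' _) (Coprod.inl h)
      rw [QuotientGroup.map_mk', PrideAux.Phi_inl]
      rfl
end

section
/- (Remark 2) Every M_H-group is a retract of an S¹_H-group: if G = G(P) for an M_H-presentation P = ⟨x, H; R⟩, then there exist an S¹_H-presentation P' = ⟨x', H; R'⟩ and homomorphisms μ : G → G(P'), ρ : G(P') → G with ρ ∘ μ = id_G (and μ injective). -/
open Monoid

/-- `W` has the *strong* unique max-min property with respect to `θ`: the unique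
max-min property where moreover the set of (two) letters occurring at the unique
maximum meets the set of letters occurring at the unique minimum. -/
def StrongUniqueMaxMinWith {X : Type*} (θ : X → ℤ) (W : List (X × Bool)) : Prop :=
  W ≠ [] ∧ IsWeightFun θ ∧ IsStrictWeight θ ∧ IsAdmissible θ W ∧
  ∃ k l : Fin W.length,
    (∀ j : Fin W.length, j ≠ k → phiW θ W (j.1 + 1) < phiW θ W (k.1 + 1)) ∧
    (∀ j : Fin W.length, j ≠ l → phiW θ W (l.1 + 1) < phiW θ W (j.1 + 1)) ∧
    (W.get k).1 ≠ (W.get (succIdx W k)).1 ∧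
    (W.get l).1 ≠ (W.get (succIdx W l)).1 ∧
    (({(W.get k).1, (W.get (succIdx W k)).1} ∩
      {(W.get l).1, (W.get (succIdx W l)).1} : Set X).Nonempty)


namespace Rk2

variable {X : Type*}

/-- The summand of `phiW`. -/
def wt (θ : X → ℤ) (p : X × Bool) : ℤ := if p.2 then θ p.1 else -θ p.1

lemma phiW_zero (θ : X → ℤ) (W : List (X × Bool)) : phiW θ W 0 = 0 := rfl

lemma phiW_succ {θ : X → ℤ} {W : List (X × Bool)} {j : ℕ} (h : j < W.length) :
    phiW θ W (j + 1) = phiW θ W j + wt θ W[j] := by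
  unfold phiW
  rw [List.take_succ, List.getElem?_eq_getElem h, List.map_append, List.sum_append]
  simp [wt]

lemma phiW_cons (θ : X → ℤ) (p : X × Bool) (W : List (X × Bool)) (i : ℕ) :
    phiW θ (p :: W) (i + 1) = wt θ p + phiW θ W i := by
  unfold phiW
  rw [List.take_succ_cons]
  simp [wt]

lemma phiW_append_left (θ : X → ℤ) {A B : List (X × Bool)} {i : ℕ} (h : i ≤ A.length) :
    phiW θ (A ++ B) i = phiW θ A i := by
  unfold phiW
  rw [List.take_append_of_le_length h]

lemma phiW_append_add (θ : X → ℤ) (A B : List (X × Bool)) (d : ℕ) :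
    phiW θ (A ++ B) (A.length + d) = phiW θ A A.length + phiW θ B d := by
  unfold phiW
  rw [List.take_append, List.map_append, List.sum_append, List.take_length]
  rw [List.take_of_length_le (Nat.le_add_right A.length d), Nat.add_sub_cancel_left]

lemma phiW_take (θ : X → ℤ) (W : List (X × Bool)) (j : ℕ) :
    phiW θ (W.take j) (W.take j).length = phiW θ W j := by
  unfold phiW
  rw [List.take_length]


lemma phiW_const {L : List (Option X × Bool)} {s : Bool} (hL : ∀ a ∈ L, a.2 = s) (i : ℕ) :
    phiW (fun _ => (1 : ℤ)) L i = (if s then 1 else -1) * min i L.length := by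
  unfold phiW
  have h : (L.take i).map (fun p => if p.2 then (1:ℤ) else -1)
      = List.replicate (min i L.length) (if s then (1:ℤ) else -1) := by
    apply List.eq_replicate_iff.mpr
    refine ⟨by simp, ?_⟩
    intro b hb
    obtain ⟨p, hp, rfl⟩ := List.mem_map.mp hb
    rw [hL p (List.mem_of_mem_take hp)]
  rw [h, List.sum_replicate, nsmul_eq_mul]
  push_cast
  ring

section Blocks

variable (θ : X → ℤ) (q : X → Bool)

/-- Block length. -/
def mm (x : X) : ℕ := (2 * θ x).natAbs

/-- Direction of the block of an occurrence. -/
def sg (p : X × Bool) : Bool := if 0 < θ p.1 then p.2 else !p.2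

/-- Signed direction. -/
def sig (p : X × Bool) : ℤ := if sg θ p then 1 else -1

/-- The block of letters replacing the occurrence `p`. -/
def blk (p : X × Bool) : List (Option X × Bool) :=
  if q p.1 = sg θ p then
    List.replicate (mm θ p.1 - 1) ((none : Option X), sg θ p) ++ [(some p.1, sg θ p)]
  else (some p.1, sg θ p) :: List.replicate (mm θ p.1 - 1) ((none : Option X), sg θ p)

variable {θ q}

lemma two_le_mm {x : X} (hx : θ x ≠ 0) : 2 ≤ mm θ x := by
  have h := Int.natAbs_pos.mpr hx
  unfold mm
  rw [Int.natAbs_mul]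
  norm_num
  omega

lemma blk_length (p : X × Bool) (hp : θ p.1 ≠ 0) : (blk θ q p).length = mm θ p.1 := by
  have h2 := two_le_mm (θ := θ) hp
  unfold blk
  split <;> simp <;> omega

lemma blk_snd {p : X × Bool} {a : Option X × Bool} (ha : a ∈ blk θ q p) : a.2 = sg θ p := by
  unfold blk at ha
  split at ha
  · rcases List.mem_append.mp ha with h | h
    · rw [List.eq_of_mem_replicate h]
    · simp at h; rw [h]
  · rcases List.mem_cons.mp ha with h | h
    · rw [h]
    · rw [List.eq_of_mem_replicate h]

lemma blk_phi (p : X × Bool) (hp : θ p.1 ≠ 0) (i : ℕ) :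
    phiW (fun _ => (1 : ℤ)) (blk θ q p) i = sig θ p * min i (mm θ p.1) := by
  rw [phiW_const (fun a ha => blk_snd ha), blk_length p hp, sig]

lemma sig_mm (p : X × Bool) (hp : θ p.1 ≠ 0) :
    sig θ p * (mm θ p.1 : ℤ) = 2 * wt θ p := by
  obtain ⟨x, ε⟩ := p
  have hA : ((2 * θ x).natAbs : ℤ) = |2 * θ x| := (Int.abs_eq_natAbs _).symm
  have h0 : θ x ≠ 0 := hp
  rcases lt_or_gt_of_ne h0 with h | h
  · have hn : ¬ 0 < θ x := by omega
    have habs : ((2 * θ x).natAbs : ℤ) = -(2 * θ x) := by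
      rw [hA, abs_of_neg (by omega : 2 * θ x < 0)]
    cases ε <;> simp [sig, sg, mm, wt, hn, habs] <;> ring
  · have habs : ((2 * θ x).natAbs : ℤ) = 2 * θ x := by
      rw [hA, abs_of_pos (by omega : 0 < 2 * θ x)]
    cases ε <;> simp [sig, sg, mm, wt, h, habs] <;> ring

end Blocks

section Offsets

variable {θ : X → ℤ} {q : X → Bool}

/-- Offset: length of the expansion of the first `j` letters. -/
def off (θ : X → ℤ) (q : X → Bool) (V : List (X × Bool)) (j : ℕ) : ℕ :=
  ((V.take j).flatMap (blk θ q)).length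

lemma off_zero (V : List (X × Bool)) : off θ q V 0 = 0 := rfl

lemma off_total (V : List (X × Bool)) : off θ q V V.length = (V.flatMap (blk θ q)).length := by
  unfold off
  rw [List.take_length]

lemma off_succ {V : List (X × Bool)} {j : ℕ} (hj : j < V.length) (hp : θ V[j].1 ≠ 0) :
    off θ q V (j + 1) = off θ q V j + mm θ V[j].1 := by
  unfold off
  rw [List.take_succ, List.getElem?_eq_getElem hj, List.flatMap_append]
  simp [blk_length _ hp]

lemma off_mono {V : List (X × Bool)} {j j' : ℕ} (h : j ≤ j') : off θ q V j ≤ off θ q V j' := by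
  unfold off
  conv_rhs => rw [← List.take_append_drop j (V.take j'), List.take_take, min_eq_left h]
  rw [List.flatMap_append, List.length_append]
  exact Nat.le_add_right _ _

lemma bind_decomp {V : List (X × Bool)} {j : ℕ} (hj : j < V.length) :
    V.flatMap (blk θ q) = (V.take j).flatMap (blk θ q) ++
      (blk θ q V[j] ++ (V.drop (j + 1)).flatMap (blk θ q)) := by
  conv_lhs => rw [← List.take_append_drop j V]
  rw [List.drop_eq_getElem_cons hj, List.flatMap_append, List.flatMap_cons]

lemma phi_prefix (hs : ∀ x, θ x ≠ 0) :
    ∀ V : List (X × Bool),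
      phiW (fun _ => (1 : ℤ)) (V.flatMap (blk θ q)) ((V.flatMap (blk θ q)).length)
        = 2 * phiW θ V V.length
  | [] => by simp [phiW]
  | p :: V => by
    rw [List.flatMap_cons, List.length_append, phiW_append_add, phi_prefix hs V,
      blk_phi _ (hs _), blk_length _ (hs _), min_self,
      show (p :: V).length = V.length + 1 from rfl, phiW_cons, sig_mm _ (hs _)]
    ring

lemma phi_at (hs : ∀ x, θ x ≠ 0) {V : List (X × Bool)} {j d : ℕ} (hj : j < V.length)
    (hd : d ≤ mm θ V[j].1) :
    phiW (fun _ => (1 : ℤ)) (V.flatMap (blk θ q)) (off θ q V j + d)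
      = 2 * phiW θ V j + sig θ V[j] * d := by
  rw [bind_decomp hj]
  rw [show off θ q V j = ((V.take j).flatMap (blk θ q)).length from rfl]
  rw [phiW_append_add, phi_prefix hs (V.take j), phiW_take,
    phiW_append_left _ (by rw [blk_length _ (hs _)]; exact hd),
    blk_phi _ (hs _), min_eq_left hd]

lemma get_at (hs : ∀ x, θ x ≠ 0) {V : List (X × Bool)} {j d : ℕ} (hj : j < V.length)
    (hd : d < mm θ V[j].1) (h' : off θ q V j + d < (V.flatMap (blk θ q)).length) :
    (V.flatMap (blk θ q))[off θ q V j + d]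
      = (blk θ q V[j])[d]'(by rw [blk_length _ (hs _)]; exact hd) := by
  rw [List.getElem_of_eq (bind_decomp hj)]
  rw [List.getElem_append_right (by exact le_add_right (le_refl _))]
  have hnn : off θ q V j + d - ((V.take j).flatMap (blk θ q)).length = d := by
    rw [show off θ q V j = ((V.take j).flatMap (blk θ q)).length from rfl]
    omega
  simp only [hnn]
  rw [List.getElem_append_left (by rw [blk_length _ (hs _)]; exact hd)]

lemma pos_decomp (hs : ∀ x, θ x ≠ 0) :
    ∀ (V : List (X × Bool)) (i : ℕ), 1 ≤ i → i ≤ (V.flatMap (blk θ q)).length →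
      ∃ j, ∃ hj : j < V.length, ∃ d, 1 ≤ d ∧ d ≤ mm θ V[j].1 ∧ i = off θ q V j + d
  | [], i, h1, h2 => by simp at h2; omega
  | p :: V, i, h1, h2 => by
    rw [List.flatMap_cons, List.length_append, blk_length _ (hs _)] at h2
    by_cases hle : i ≤ mm θ p.1
    · exact ⟨0, by simp, i, h1, hle, by simp [off_zero]⟩
    · obtain ⟨j, hj, d, h3, h4, h5⟩ := pos_decomp hs V (i - mm θ p.1) (by omega) (by omega)
      have hoff : off θ q (p :: V) (j + 1) = mm θ p.1 + off θ q V j := by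
        simp [off, List.take_succ_cons, List.flatMap_cons, blk_length _ (hs _)]
      exact ⟨j + 1, by simpa using hj, d, h3, by simpa using h4, by rw [hoff]; omega⟩

lemma sg_of_lt {θ : X → ℤ} {q : X → Bool} (hs : ∀ x, θ x ≠ 0) {V : List (X × Bool)} {j : ℕ}
    (hj : j < V.length) (h : phiW θ V j < phiW θ V (j + 1)) : sg θ V[j] = true := by
  have h1 := phiW_succ (θ := θ) hj
  have h2 := sig_mm (θ := θ) V[j] (hs _)
  cases hsg : sg θ V[j]
  · exfalso
    rw [sig, hsg, if_neg (by simp)] at h2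
    have hmm : (0:ℤ) ≤ (mm θ V[j].1 : ℤ) := by positivity
    omega
  · rfl

lemma sg_of_gt {θ : X → ℤ} {q : X → Bool} (hs : ∀ x, θ x ≠ 0) {V : List (X × Bool)} {j : ℕ}
    (hj : j < V.length) (h : phiW θ V (j + 1) < phiW θ V j) : sg θ V[j] = false := by
  have h1 := phiW_succ (θ := θ) hj
  have h2 := sig_mm (θ := θ) V[j] (hs _)
  cases hsg : sg θ V[j]
  · rfl
  · exfalso
    rw [sig, hsg, if_pos rfl] at h2
    have h3 := two_le_mm (θ := θ) (x := V[j].1) (hs _)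
    have hmm : (2:ℤ) ≤ (mm θ V[j].1 : ℤ) := by exact_mod_cast h3
    omega

lemma get_at' (hs : ∀ x, θ x ≠ 0) {V : List (X × Bool)} {j d i : ℕ} (hj : j < V.length)
    (hd : d < mm θ V[j].1) (hi : i = off θ q V j + d) (h' : i < (V.flatMap (blk θ q)).length) :
    (V.flatMap (blk θ q))[i]
      = (blk θ q V[j])[d]'(by rw [blk_length _ (hs _)]; exact hd) := by
  subst hi
  exact get_at hs hj hd h'

lemma blk_zero (p : X × Bool) (hp : θ p.1 ≠ 0) (h0 : 0 < (blk θ q p).length) :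
    (blk θ q p)[0] = (if q p.1 = sg θ p then ((none : Option X), sg θ p)
      else (some p.1, sg θ p)) := by
  have h2 := two_le_mm (θ := θ) hp
  by_cases h : q p.1 = sg θ p
  · have hb : blk θ q p = List.replicate (mm θ p.1 - 1) ((none : Option X), sg θ p)
        ++ [(some p.1, sg θ p)] := by unfold blk; rw [if_pos h]
    rw [if_pos h, List.getElem_of_eq hb, List.getElem_append_left (by simp; omega)]
    simp
  · have hb : blk θ q p = (some p.1, sg θ p)
        :: List.replicate (mm θ p.1 - 1) ((none : Option X), sg θ p) := by
      unfold blk; rw [if_neg h]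
    rw [if_neg h, List.getElem_of_eq hb]
    rfl

lemma blk_last (p : X × Bool) (hp : θ p.1 ≠ 0) (h0 : mm θ p.1 - 1 < (blk θ q p).length) :
    (blk θ q p)[mm θ p.1 - 1] = (if q p.1 = sg θ p then (some p.1, sg θ p)
      else ((none : Option X), sg θ p)) := by
  have h2 := two_le_mm (θ := θ) hp
  by_cases h : q p.1 = sg θ p
  · have hb : blk θ q p = List.replicate (mm θ p.1 - 1) ((none : Option X), sg θ p)
        ++ [(some p.1, sg θ p)] := by unfold blk; rw [if_pos h]
    rw [if_pos h, List.getElem_of_eq hb, List.getElem_append_right (by simp)]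
    simp
  · have hb : blk θ q p = (some p.1, sg θ p)
        :: List.replicate (mm θ p.1 - 1) ((none : Option X), sg θ p) := by
      unfold blk; rw [if_neg h]
    rw [if_neg h, List.getElem_of_eq hb, List.getElem_cons, dif_neg (by omega)]
    simp

lemma blk_not (x : X) (ε : Bool) :
    blk θ q (x, !ε) = FreeGroup.invRev (blk θ q (x, ε)) := by
  have hsg : sg θ (x, !ε) = !(sg θ (x, ε)) := by
    unfold sg
    split <;> simp
  by_cases h : q x = sg θ (x, ε)
  · have h1 : blk θ q (x, ε) = List.replicate (mm θ x - 1) ((none : Option X), sg θ (x, ε))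
        ++ [(some x, sg θ (x, ε))] := by unfold blk; rw [if_pos h]
    have h2 : blk θ q (x, !ε) = (some x, !sg θ (x, ε))
        :: List.replicate (mm θ x - 1) ((none : Option X), !sg θ (x, ε)) := by
      unfold blk
      rw [show (x, !ε).1 = x from rfl, hsg, if_neg (by simp [h])]
    rw [h1, h2, FreeGroup.invRev]
    simp
  · have hq' : q x = !sg θ (x, ε) := by
      cases hqx : q x <;> cases hsv : sg θ (x, ε) <;> simp_all
    have h1 : blk θ q (x, ε) = (some x, sg θ (x, ε))
        :: List.replicate (mm θ x - 1) ((none : Option X), sg θ (x, ε)) := by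
      unfold blk; rw [if_neg h]
    have h2 : blk θ q (x, !ε) = List.replicate (mm θ x - 1) ((none : Option X), !sg θ (x, ε))
        ++ [(some x, !sg θ (x, ε))] := by
      unfold blk
      rw [show (x, !ε).1 = x from rfl, hsg, if_pos hq']
    rw [h1, h2, FreeGroup.invRev]
    simp

lemma exists_coloring {α : Type*} {a b c d : α} (hab : a ≠ b) (hcd : c ≠ d) :
    ∃ q : α → Bool, q a ≠ q b ∧ q c ≠ q d := by
  classical
  by_cases hbc : b = c
  · refine ⟨fun x => if x = b then true else false, ?_, ?_⟩
    · simp [hab]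
    · have h1 : c = b := hbc.symm
      have h2 : d ≠ b := fun h => hcd (by rw [h1, h])
      simp [h1, h2]
  · by_cases hda : d = a
    · refine ⟨fun x => if x = a then true else false, ?_, ?_⟩
      · simp [Ne.symm hab]
      · have h2 : c ≠ a := fun h => hcd (h.trans hda.symm)
        simp [h2, hda]
    · refine ⟨fun x => if x = a then true else if x = c then true else false, ?_, ?_⟩
      · simp [Ne.symm hab, hbc]
      · by_cases hca : c = a <;> simp [hca, hda, Ne.symm hcd]

end Offsets

section GroupPart

variable {H : Type*} [Group H]

/-- Attach `h` to the last letter of `L` (and `1` to all earlier letters). -/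
def attach (h : H) : List (X × Bool) → List (X × Bool × H)
  | [] => []
  | [p] => [(p.1, p.2, h)]
  | p :: a :: rest => (p.1, p.2, 1) :: attach h (a :: rest)

lemma skel_attach (h : H) : ∀ L : List (X × Bool), skel (attach h L) = L
  | [] => rfl
  | [p] => by simp [attach, skel]
  | p :: a :: rest => by
    rw [show attach h (p :: a :: rest) = (p.1, p.2, 1) :: attach h (a :: rest) from rfl]
    rw [show skel ((p.1, p.2, (1:H)) :: attach h (a :: rest))
      = (p.1, p.2) :: skel (attach h (a :: rest)) from rfl]
    rw [skel_attach h (a :: rest)]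

lemma relWord_cons (t : X × Bool × H) (T : List (X × Bool × H)) :
    relWord (t :: T) = (Coprod.inr (FreeGroup.mk [(t.1, t.2.1)]) * Coprod.inl t.2.2)
      * relWord T := by
  unfold relWord
  rw [List.map_cons, List.prod_cons]

lemma relWord_append (A B : List (X × Bool × H)) :
    relWord (A ++ B) = relWord A * relWord B := by
  unfold relWord
  rw [List.map_append, List.prod_append]

lemma relWord_attach (h : H) : ∀ L : List (X × Bool), L ≠ [] →
    relWord (attach h L) = Coprod.inr (FreeGroup.mk L) * Coprod.inl h
  | [], hne => absurd rfl hne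
  | [p], _ => by
    rw [show attach h [p] = [(p.1, p.2, h)] from rfl]
    unfold relWord
    simp
  | p :: a :: rest, _ => by
    rw [show attach h (p :: a :: rest) = (p.1, p.2, 1) :: attach h (a :: rest) from rfl,
      relWord_cons, relWord_attach h (a :: rest) (by simp)]
    simp only [map_one, mul_one]
    rw [← mul_assoc, ← map_mul, FreeGroup.mul_mk]
    rfl

end GroupPart

section Subst

variable {H : Type*} [Group H] (θ : X → ℤ) (q : X → Bool)

/-- The substituted word for the letter `x`. -/
def ww (x : X) : FreeGroup (Option X) := FreeGroup.mk (blk θ q (x, true))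

/-- The back substitution. -/
def uu : Option X → FreeGroup X :=
  fun o => o.elim 1 fun x => if 0 < θ x then FreeGroup.of x else (FreeGroup.of x)⁻¹

/-- The substitution homomorphism. -/
def phis : Coprod H (FreeGroup X) →* Coprod H (FreeGroup (Option X)) :=
  Coprod.lift Coprod.inl (Coprod.inr.comp (FreeGroup.lift (ww θ q)))

/-- The retraction homomorphism. -/
def psis : Coprod H (FreeGroup (Option X)) →* Coprod H (FreeGroup X) :=
  Coprod.lift Coprod.inl (Coprod.inr.comp (FreeGroup.lift (uu θ)))

variable {θ q}

lemma blk_ne_nil {p : X × Bool} (hp : θ p.1 ≠ 0) : blk θ q p ≠ [] := by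
  intro h
  have h1 := blk_length (q := q) p hp
  have h2 := two_le_mm (θ := θ) hp
  rw [h] at h1
  simp at h1
  omega

lemma lift_uu_ww (hs : ∀ x, θ x ≠ 0) (x : X) :
    FreeGroup.lift (uu θ) (ww θ q x) = FreeGroup.of x := by
  unfold ww
  rw [FreeGroup.lift_mk]
  have hone : ∀ k : ℕ, ((List.replicate k ((none : Option X), sg θ (x, true))).map
      fun p => cond p.2 (uu θ p.1) (uu θ p.1)⁻¹).prod = 1 := by
    intro k
    rw [List.map_replicate, List.prod_replicate]
    have : (cond (sg θ (x, true)) (uu θ (none : Option X)) (uu θ (none : Option X))⁻¹) = 1 := by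
      cases sg θ (x, true) <;> simp [uu]
    rw [this, one_pow]
  have hxval : (cond (sg θ (x, true)) (uu θ (some x)) (uu θ (some x))⁻¹) = FreeGroup.of x := by
    by_cases h0 : 0 < θ x
    · have : sg θ (x, true) = true := by simp [sg, h0]
      rw [this]
      simp [uu, h0]
    · have : sg θ (x, true) = false := by simp [sg, h0]
      rw [this]
      simp [uu, h0]
  by_cases h : q x = sg θ (x, true)
  · have hb : blk θ q (x, true) = List.replicate (mm θ x - 1) ((none : Option X), sg θ (x, true))
        ++ [(some x, sg θ (x, true))] := by unfold blk; rw [if_pos h]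
    rw [hb, List.map_append, List.prod_append, hone]
    simp [hxval]
  · have hb : blk θ q (x, true) = (some x, sg θ (x, true))
        :: List.replicate (mm θ x - 1) ((none : Option X), sg θ (x, true)) := by
      unfold blk; rw [if_neg h]
    rw [hb, List.map_cons, List.prod_cons, hone]
    simp [hxval]

lemma psis_phis (hs : ∀ x, θ x ≠ 0) :
    (psis θ (H := H)).comp (phis θ q) = MonoidHom.id (Coprod H (FreeGroup X)) := by
  apply Coprod.hom_ext
  · rfl
  · rw [MonoidHom.comp_assoc]
    rw [show (phis θ q (H := H)).comp Coprod.inr = Coprod.inr.comp (FreeGroup.lift (ww θ q))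
      from rfl]
    rw [← MonoidHom.comp_assoc]
    apply FreeGroup.ext_hom
    intro a
    simp only [MonoidHom.comp_apply, FreeGroup.lift_apply_of, MonoidHom.id_comp]
    rw [show (psis θ (H := H)) (Coprod.inr (ww θ q a))
        = Coprod.inr (FreeGroup.lift (uu θ) (ww θ q a)) from Coprod.lift_apply_inr _ _ _,
      lift_uu_ww hs]

/-- Expansion of a single relator letter. -/
def expand (t : X × Bool × H) : List (Option X × Bool × H) :=
  attach t.2.2 (blk θ q (t.1, t.2.1))

variable (θ q) in
lemma skel_flatMap_expand (R : List (X × Bool × H)) :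
    skel (R.flatMap (expand (θ := θ) (q := q))) = (skel R).flatMap (blk θ q) := by
  unfold skel
  rw [List.map_flatMap, List.flatMap_map]
  have h : (fun t : X × Bool × H =>
      (expand (θ := θ) (q := q) t).map fun t => (t.1, t.2.1))
      = fun t : X × Bool × H => blk θ q (t.1, t.2.1) := by
    funext t
    exact skel_attach t.2.2 (blk θ q (t.1, t.2.1))
  rw [h]

lemma mk_single_false (x : X) : FreeGroup.mk [(x, false)] = (FreeGroup.of x)⁻¹ := by
  rw [show FreeGroup.of x = FreeGroup.mk [(x, true)] from rfl, FreeGroup.inv_mk]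
  rfl

lemma relWord_flatMap_expand (hs : ∀ x, θ x ≠ 0) :
    ∀ R : List (X × Bool × H),
      relWord (R.flatMap (expand (θ := θ) (q := q))) = phis θ q (relWord R)
  | [] => by
    unfold relWord
    simp
  | t :: R => by
    rw [List.flatMap_cons, relWord_append, relWord_flatMap_expand hs R]
    conv_rhs => rw [relWord_cons, map_mul, map_mul]
    congr 1
    rw [show expand (θ := θ) (q := q) t = attach t.2.2 (blk θ q (t.1, t.2.1)) from rfl,
      relWord_attach _ _ (blk_ne_nil (hs _))]
    congr 1
    · rw [show (phis θ q (H := H)) (Coprod.inr (FreeGroup.mk [(t.1, t.2.1)]))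
          = Coprod.inr (FreeGroup.lift (ww θ q) (FreeGroup.mk [(t.1, t.2.1)]))
          from Coprod.lift_apply_inr _ _ _]
      rcases t with ⟨x, ε, h⟩
      cases ε
      · rw [show ((x, false, h).1, (x, false, h).2.1) = (x, false) from rfl,
          show FreeGroup.mk [((x, false, h).1, (x, false, h).2.1)]
            = FreeGroup.mk [(x, false)] from rfl,
          mk_single_false, map_inv, FreeGroup.lift_apply_of,
          show ((x : X), false) = (x, !true) from rfl, blk_not, ← FreeGroup.inv_mk]
        rfl
      · rw [show FreeGroup.mk [((x, true, h).1, (x, true, h).2.1)]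
            = FreeGroup.of x from rfl, FreeGroup.lift_apply_of]
        rfl

end Subst




end Rk2

universe u v

/-- **Remark 2** (Pride). Every `M_H`-group is a retract of an `S¹_H`-group: if
`G = G(P)` for an `M_H`-presentation `P = ⟨x, H; R⟩`, then there is a presentation
`P' = ⟨x', H; R'⟩` whose skeleton has the strong unique max-min property with
respect to the constant weight function `1`, and homomorphisms `μ : G → G(P')`
(injective) and `ρ : G(P') → G` with `ρ ∘ μ = id`. -/
theorem retract_of_S1 {X : Type u} {H : Type v} [Group H]
    (R : List (X × Bool × H)) (hP : HasUniqueMaxMin (skel R)) :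
    ∃ (X' : Type u) (R' : List (X' × Bool × H)),
      StrongUniqueMaxMinWith (fun _ => (1 : ℤ)) (skel R') ∧
      ∃ (μ : relGroup R →* relGroup R') (ρ : relGroup R' →* relGroup R),
        ρ.comp μ = MonoidHom.id (relGroup R) ∧ Function.Injective μ := by
  classical
  set W : List (X × Bool) := skel R with hW
  obtain ⟨θ, hne, hwf, hs, hadm, k, l, hmax, hmin, hk, hl⟩ := hP
  obtain ⟨q, hqab, hqcd⟩ := Rk2.exists_coloring hk hl
  have hr1 : 0 < W.length := List.length_pos_iff.mpr hne
  have hr2 : 2 ≤ W.length := by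
    by_contra h
    have h2 : succIdx W k = k := by
      apply Fin.ext
      show (k.1 + 1) % W.length = k.1
      have hk1 := k.isLt
      have h1 : W.length = 1 := by omega
      have hk0 : k.1 = 0 := by omega
      have h2 : (0 + 1) % W.length = 0 := by rw [h1]
      rw [hk0]
      exact h2
    exact hk (by rw [h2])
  have hkr := k.isLt
  have hlr := l.isLt
  have hΦ0 : phiW θ W 0 = 0 := rfl
  have hΦr : phiW θ W W.length = 0 := hadm
  have hMlt : ∀ j, 1 ≤ j → j ≤ W.length → j ≠ k.1 + 1 →
      phiW θ W j < phiW θ W (k.1 + 1) := by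
    intro j h1 h2 h3
    have hjr : j - 1 < W.length := by omega
    have hne' : (⟨j - 1, hjr⟩ : Fin W.length) ≠ k := by
      intro hh
      apply h3
      have h4 := congrArg Fin.val hh
      simp only [] at h4
      omega
    have h5 := hmax ⟨j - 1, hjr⟩ hne'
    simpa [show j - 1 + 1 = j by omega] using h5
  have hmlt : ∀ j, 1 ≤ j → j ≤ W.length → j ≠ l.1 + 1 →
      phiW θ W (l.1 + 1) < phiW θ W j := by
    intro j h1 h2 h3
    have hjr : j - 1 < W.length := by omega
    have hne' : (⟨j - 1, hjr⟩ : Fin W.length) ≠ l := by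
      intro hh
      apply h3
      have h4 := congrArg Fin.val hh
      simp only [] at h4
      omega
    have h5 := hmin ⟨j - 1, hjr⟩ hne'
    simpa [show j - 1 + 1 = j by omega] using h5
  have hM0 : 0 ≤ phiW θ W (k.1 + 1) := by
    by_cases h : k.1 + 1 = W.length
    · rw [h, hΦr]
    · have := hMlt W.length (by omega) (le_refl _) (fun hh => h hh.symm)
      omega
  have hm0 : phiW θ W (l.1 + 1) ≤ 0 := by
    by_cases h : l.1 + 1 = W.length
    · rw [h, hΦr]
    · have := hmlt W.length (by omega) (le_refl _) (fun hh => h hh.symm)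
      omega
  have hMle : ∀ j, j ≤ W.length → phiW θ W j ≤ phiW θ W (k.1 + 1) := by
    intro j hj
    rcases Nat.eq_zero_or_pos j with h0 | h0
    · rw [h0, hΦ0]; exact hM0
    · by_cases hjk : j = k.1 + 1
      · rw [hjk]
      · exact le_of_lt (hMlt j h0 hj hjk)
  have hmge : ∀ j, j ≤ W.length → phiW θ W (l.1 + 1) ≤ phiW θ W j := by
    intro j hj
    rcases Nat.eq_zero_or_pos j with h0 | h0
    · rw [h0, hΦ0]; exact hm0
    · by_cases hjl : j = l.1 + 1
      · rw [hjl]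
      · exact le_of_lt (hmlt j h0 hj hjl)
  have hoffr : Rk2.off θ q W W.length = (W.flatMap (Rk2.blk θ q)).length :=
    Rk2.off_total W
  have hskel : skel (R.flatMap (Rk2.expand (θ := θ) (q := q))) = W.flatMap (Rk2.blk θ q) :=
    Rk2.skel_flatMap_expand θ q R
  refine ⟨Option X, R.flatMap (Rk2.expand (θ := θ) (q := q)), ?_, ?_⟩
  · rw [hskel]
    -- bounds for the two special positions
    have hKdef := Rk2.off_succ (θ := θ) (q := q) (V := W) k.isLt (hs _)
    have hLdef := Rk2.off_succ (θ := θ) (q := q) (V := W) l.isLt (hs _)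
    have hmmk := Rk2.two_le_mm (θ := θ) (x := (W[k.1]'k.isLt).1) (hs _)
    have hmml := Rk2.two_le_mm (θ := θ) (x := (W[l.1]'l.isLt).1) (hs _)
    have hKN : Rk2.off θ q W (k.1 + 1) ≤ (W.flatMap (Rk2.blk θ q)).length :=
      hoffr ▸ Rk2.off_mono (by omega)
    have hLN : Rk2.off θ q W (l.1 + 1) ≤ (W.flatMap (Rk2.blk θ q)).length :=
      hoffr ▸ Rk2.off_mono (by omega)
    have hoff0 := Rk2.off_zero (θ := θ) (q := q) W
    have hoffk0 : Rk2.off θ q W 0 ≤ Rk2.off θ q W k.1 := Rk2.off_mono (by omega)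
    have hoffl0 : Rk2.off θ q W 0 ≤ Rk2.off θ q W l.1 := Rk2.off_mono (by omega)
    have hK1 : 1 ≤ Rk2.off θ q W (k.1 + 1) := by omega
    have hL1 : 1 ≤ Rk2.off θ q W (l.1 + 1) := by omega
    have hNpos : 0 < (W.flatMap (Rk2.blk θ q)).length := by omega
    have hphiK : phiW (fun _ => (1 : ℤ)) (W.flatMap (Rk2.blk θ q)) (Rk2.off θ q W (k.1 + 1))
        = 2 * phiW θ W (k.1 + 1) := by
      rw [hKdef, Rk2.phi_at hs k.isLt (le_refl _), Rk2.sig_mm _ (hs _),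
        Rk2.phiW_succ k.isLt]
      ring
    have hphiL : phiW (fun _ => (1 : ℤ)) (W.flatMap (Rk2.blk θ q)) (Rk2.off θ q W (l.1 + 1))
        = 2 * phiW θ W (l.1 + 1) := by
      rw [hLdef, Rk2.phi_at hs l.isLt (le_refl _), Rk2.sig_mm _ (hs _),
        Rk2.phiW_succ l.isLt]
      ring
    have hub : ∀ i, 1 ≤ i → i ≤ (W.flatMap (Rk2.blk θ q)).length →
        i ≠ Rk2.off θ q W (k.1 + 1) →
        phiW (fun _ => (1 : ℤ)) (W.flatMap (Rk2.blk θ q)) i < 2 * phiW θ W (k.1 + 1) := by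
      intro i h1 h2 h3
      obtain ⟨j, hj, d, hd1, hd2, hi⟩ := Rk2.pos_decomp hs W i h1 h2
      subst hi
      rw [Rk2.phi_at hs hj hd2]
      have hstepj : 2 * phiW θ W (j + 1) = 2 * phiW θ W j + 2 * Rk2.wt θ (W[j]'hj) := by
        rw [Rk2.phiW_succ hj]; ring
      have hd1' : (1 : ℤ) ≤ (d : ℤ) := by exact_mod_cast hd1
      have hd2' : (d : ℤ) ≤ (Rk2.mm θ (W[j]'hj).1 : ℤ) := by exact_mod_cast hd2
      cases hsg : Rk2.sg θ (W[j]'hj)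
      · have hsig : Rk2.sig θ (W[j]'hj) = -1 := by rw [Rk2.sig, hsg]; simp
        rw [hsig]
        have hΦj : phiW θ W j ≤ phiW θ W (k.1 + 1) := hMle j (by omega)
        linarith
      · have hsig : Rk2.sig θ (W[j]'hj) = 1 := by rw [Rk2.sig, hsg]; simp
        rw [hsig]
        have hmmwt : (Rk2.mm θ (W[j]'hj).1 : ℤ) = 2 * Rk2.wt θ (W[j]'hj) := by
          have h6 := Rk2.sig_mm (θ := θ) (W[j]'hj) (hs _)
          rw [Rk2.sig, hsg, if_pos rfl] at h6
          linarith
        by_cases hjk : j = k.1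
        · have hKdefj : Rk2.off θ q W (j + 1) = Rk2.off θ q W j + Rk2.mm θ (W[j]'hj).1 := by
            subst hjk; exact hKdef
          have hMj : phiW θ W (j + 1) = phiW θ W (k.1 + 1) := by rw [hjk]
          have h3' := h3
          rw [← hjk] at h3'
          have hdlt : d < Rk2.mm θ (W[j]'hj).1 := by omega
          have hdlt' : (d : ℤ) < (Rk2.mm θ (W[j]'hj).1 : ℤ) := by exact_mod_cast hdlt
          linarith
        · have hΦj1 : phiW θ W (j + 1) < phiW θ W (k.1 + 1) :=
            hMlt (j + 1) (by omega) (by omega) (by omega)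
          linarith
    have hlb : ∀ i, 1 ≤ i → i ≤ (W.flatMap (Rk2.blk θ q)).length →
        i ≠ Rk2.off θ q W (l.1 + 1) →
        2 * phiW θ W (l.1 + 1) < phiW (fun _ => (1 : ℤ)) (W.flatMap (Rk2.blk θ q)) i := by
      intro i h1 h2 h3
      obtain ⟨j, hj, d, hd1, hd2, hi⟩ := Rk2.pos_decomp hs W i h1 h2
      subst hi
      rw [Rk2.phi_at hs hj hd2]
      have hstepj : 2 * phiW θ W (j + 1) = 2 * phiW θ W j + 2 * Rk2.wt θ (W[j]'hj) := by
        rw [Rk2.phiW_succ hj]; ring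
      have hd1' : (1 : ℤ) ≤ (d : ℤ) := by exact_mod_cast hd1
      have hd2' : (d : ℤ) ≤ (Rk2.mm θ (W[j]'hj).1 : ℤ) := by exact_mod_cast hd2
      cases hsg : Rk2.sg θ (W[j]'hj)
      · have hsig : Rk2.sig θ (W[j]'hj) = -1 := by rw [Rk2.sig, hsg]; simp
        rw [hsig]
        have hmmwt : (Rk2.mm θ (W[j]'hj).1 : ℤ) = -(2 * Rk2.wt θ (W[j]'hj)) := by
          have h6 := Rk2.sig_mm (θ := θ) (W[j]'hj) (hs _)
          rw [Rk2.sig, hsg] at h6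
          simp at h6
          linarith
        by_cases hjl : j = l.1
        · have hLdefj : Rk2.off θ q W (j + 1) = Rk2.off θ q W j + Rk2.mm θ (W[j]'hj).1 := by
            subst hjl; exact hLdef
          have hMj : phiW θ W (j + 1) = phiW θ W (l.1 + 1) := by rw [hjl]
          have h3' := h3
          rw [← hjl] at h3'
          have hdlt : d < Rk2.mm θ (W[j]'hj).1 := by omega
          have hdlt' : (d : ℤ) < (Rk2.mm θ (W[j]'hj).1 : ℤ) := by exact_mod_cast hdlt
          linarith
        · have hΦj1 : phiW θ W (l.1 + 1) < phiW θ W (j + 1) :=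
            hmlt (j + 1) (by omega) (by omega) (by omega)
          linarith
      · have hsig : Rk2.sig θ (W[j]'hj) = 1 := by rw [Rk2.sig, hsg]; simp
        rw [hsig]
        have hΦj : phiW θ W (l.1 + 1) ≤ phiW θ W j := hmge j (by omega)
        linarith
    -- signs of the four relevant blocks
    have hsgk : Rk2.sg θ (W[k.1]'k.isLt) = true := by
      apply Rk2.sg_of_lt (q := q) hs k.isLt
      rcases Nat.eq_zero_or_pos k.1 with h0 | h0
      · have h4 := hMlt W.length (by omega) (le_refl _) (by omega)
        rw [hΦr] at h4
        rw [h0, hΦ0]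
        rw [h0] at h4
        exact h4
      · exact hMlt k.1 h0 (by omega) (by omega)
    have hsgl : Rk2.sg θ (W[l.1]'l.isLt) = false := by
      apply Rk2.sg_of_gt (q := q) hs l.isLt
      rcases Nat.eq_zero_or_pos l.1 with h0 | h0
      · have h4 := hmlt W.length (by omega) (le_refl _) (by omega)
        rw [hΦr] at h4
        rw [h0, hΦ0]
        rw [h0] at h4
        exact h4
      · exact hmlt l.1 h0 (by omega) (by omega)
    have hkpr : (k.1 + 1) % W.length < W.length := Nat.mod_lt _ (by omega)
    have hlpr : (l.1 + 1) % W.length < W.length := Nat.mod_lt _ (by omega)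
    have hsgkp : Rk2.sg θ (W[(k.1 + 1) % W.length]'hkpr) = false := by
      apply Rk2.sg_of_gt (q := q) hs hkpr
      by_cases hkr2 : k.1 + 1 = W.length
      · have h4 := hMlt 1 (le_refl _) (by omega) (by omega)
        rw [hkr2, hΦr] at h4
        have h5 : (k.1 + 1) % W.length = 0 := by rw [hkr2, Nat.mod_self]
        rw [h5, hΦ0]
        exact h4
      · have h5 : (k.1 + 1) % W.length = k.1 + 1 := Nat.mod_eq_of_lt (by omega)
        rw [h5]
        exact hMlt (k.1 + 2) (by omega) (by omega) (by omega)
    have hsglp : Rk2.sg θ (W[(l.1 + 1) % W.length]'hlpr) = true := by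
      apply Rk2.sg_of_lt (q := q) hs hlpr
      by_cases hlr2 : l.1 + 1 = W.length
      · have h4 := hmlt 1 (le_refl _) (by omega) (by omega)
        rw [hlr2, hΦr] at h4
        have h5 : (l.1 + 1) % W.length = 0 := by rw [hlr2, Nat.mod_self]
        rw [h5, hΦ0]
        exact h4
      · have h5 : (l.1 + 1) % W.length = l.1 + 1 := Nat.mod_eq_of_lt (by omega)
        rw [h5]
        exact hmlt (l.1 + 2) (by omega) (by omega) (by omega)
    -- positions of the successors
    have hmodK : (Rk2.off θ q W (k.1 + 1) - 1 + 1) % (W.flatMap (Rk2.blk θ q)).length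
        = Rk2.off θ q W ((k.1 + 1) % W.length) := by
      rw [Nat.sub_add_cancel hK1]
      by_cases hkr2 : k.1 + 1 = W.length
      · have h6 : Rk2.off θ q W (k.1 + 1) = (W.flatMap (Rk2.blk θ q)).length := by
          rw [hkr2, hoffr]
        have h7 : (k.1 + 1) % W.length = 0 := by rw [hkr2, Nat.mod_self]
        rw [h6, h7, hoff0, Nat.mod_self]
      · have h5 : (k.1 + 1) % W.length = k.1 + 1 := Nat.mod_eq_of_lt (by omega)
        have h6 := Rk2.off_succ (θ := θ) (q := q) (V := W) (j := k.1 + 1) (by omega) (hs _)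
        have h7 : Rk2.off θ q W (k.1 + 1 + 1) ≤ (W.flatMap (Rk2.blk θ q)).length :=
          hoffr ▸ Rk2.off_mono (by omega)
        have h8 := Rk2.two_le_mm (θ := θ) (x := (W[k.1 + 1]'(by omega)).1) (hs _)
        rw [h5]
        exact Nat.mod_eq_of_lt (by omega)
    have hmodL : (Rk2.off θ q W (l.1 + 1) - 1 + 1) % (W.flatMap (Rk2.blk θ q)).length
        = Rk2.off θ q W ((l.1 + 1) % W.length) := by
      rw [Nat.sub_add_cancel hL1]
      by_cases hlr2 : l.1 + 1 = W.length
      · have h6 : Rk2.off θ q W (l.1 + 1) = (W.flatMap (Rk2.blk θ q)).length := by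
          rw [hlr2, hoffr]
        have h7 : (l.1 + 1) % W.length = 0 := by rw [hlr2, Nat.mod_self]
        rw [h6, h7, hoff0, Nat.mod_self]
      · have h5 : (l.1 + 1) % W.length = l.1 + 1 := Nat.mod_eq_of_lt (by omega)
        have h6 := Rk2.off_succ (θ := θ) (q := q) (V := W) (j := l.1 + 1) (by omega) (hs _)
        have h7 : Rk2.off θ q W (l.1 + 1 + 1) ≤ (W.flatMap (Rk2.blk θ q)).length :=
          hoffr ▸ Rk2.off_mono (by omega)
        have h8 := Rk2.two_le_mm (θ := θ) (x := (W[l.1 + 1]'(by omega)).1) (hs _)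
        rw [h5]
        exact Nat.mod_eq_of_lt (by omega)
    -- letters at the four relevant positions
    have hgetK : (W.flatMap (Rk2.blk θ q))[Rk2.off θ q W (k.1 + 1) - 1]'(by omega)
        = (if q (W[k.1]'k.isLt).1 = Rk2.sg θ (W[k.1]'k.isLt)
            then (some (W[k.1]'k.isLt).1, Rk2.sg θ (W[k.1]'k.isLt))
            else (none, Rk2.sg θ (W[k.1]'k.isLt))) := by
      rw [Rk2.get_at' (q := q) hs k.isLt (d := Rk2.mm θ (W[k.1]'k.isLt).1 - 1)
        (by omega) (by omega) (by omega)]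
      exact Rk2.blk_last _ (hs _) (by rw [Rk2.blk_length _ (hs _)]; omega)
    have hgetL : (W.flatMap (Rk2.blk θ q))[Rk2.off θ q W (l.1 + 1) - 1]'(by omega)
        = (if q (W[l.1]'l.isLt).1 = Rk2.sg θ (W[l.1]'l.isLt)
            then (some (W[l.1]'l.isLt).1, Rk2.sg θ (W[l.1]'l.isLt))
            else (none, Rk2.sg θ (W[l.1]'l.isLt))) := by
      rw [Rk2.get_at' (q := q) hs l.isLt (d := Rk2.mm θ (W[l.1]'l.isLt).1 - 1)
        (by omega) (by omega) (by omega)]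
      exact Rk2.blk_last _ (hs _) (by rw [Rk2.blk_length _ (hs _)]; omega)
    have hmmkp := Rk2.two_le_mm (θ := θ) (x := (W[(k.1 + 1) % W.length]'hkpr).1) (hs _)
    have hmmlp := Rk2.two_le_mm (θ := θ) (x := (W[(l.1 + 1) % W.length]'hlpr).1) (hs _)
    have hgetKP : (W.flatMap (Rk2.blk θ q))[(Rk2.off θ q W (k.1 + 1) - 1 + 1)
          % (W.flatMap (Rk2.blk θ q)).length]'(Nat.mod_lt _ hNpos)
        = (if q (W[(k.1 + 1) % W.length]'hkpr).1 = Rk2.sg θ (W[(k.1 + 1) % W.length]'hkpr)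
            then (none, Rk2.sg θ (W[(k.1 + 1) % W.length]'hkpr))
            else (some (W[(k.1 + 1) % W.length]'hkpr).1,
              Rk2.sg θ (W[(k.1 + 1) % W.length]'hkpr))) := by
      rw [Rk2.get_at' (q := q) hs hkpr (d := 0) (by omega) (by rw [hmodK]; omega) (Nat.mod_lt _ hNpos)]
      exact Rk2.blk_zero _ (hs _) (by rw [Rk2.blk_length _ (hs _)]; omega)
    have hgetLP : (W.flatMap (Rk2.blk θ q))[(Rk2.off θ q W (l.1 + 1) - 1 + 1)
          % (W.flatMap (Rk2.blk θ q)).length]'(Nat.mod_lt _ hNpos)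
        = (if q (W[(l.1 + 1) % W.length]'hlpr).1 = Rk2.sg θ (W[(l.1 + 1) % W.length]'hlpr)
            then (none, Rk2.sg θ (W[(l.1 + 1) % W.length]'hlpr))
            else (some (W[(l.1 + 1) % W.length]'hlpr).1,
              Rk2.sg θ (W[(l.1 + 1) % W.length]'hlpr))) := by
      rw [Rk2.get_at' (q := q) hs hlpr (d := 0) (by omega) (by rw [hmodL]; omega) (Nat.mod_lt _ hNpos)]
      exact Rk2.blk_zero _ (hs _) (by rw [Rk2.blk_length _ (hs _)]; omega)
    have hqab' : q (W[k.1]'k.isLt).1 ≠ q (W[(k.1 + 1) % W.length]'hkpr).1 := hqab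
    have hqcd' : q (W[l.1]'l.isLt).1 ≠ q (W[(l.1 + 1) % W.length]'hlpr).1 := hqcd
    refine ⟨?_, ?_, fun _ => one_ne_zero, ?_, ?_⟩
    · -- nonempty
      intro hnil
      rw [hnil] at hNpos
      simp at hNpos
    · -- weight function
      refine (AddSubgroup.eq_top_iff' _).mpr fun n => ?_
      have h1 : (1 : ℤ) ∈ AddSubgroup.closure (Set.range fun _ : Option X => (1 : ℤ)) :=
        AddSubgroup.subset_closure ⟨none, rfl⟩
      simpa using AddSubgroup.zsmul_mem _ h1 n
    · -- admissible
      show phiW (fun _ => (1 : ℤ)) (W.flatMap (Rk2.blk θ q)) (W.flatMap (Rk2.blk θ q)).length = 0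
      rw [Rk2.phi_prefix hs W, hΦr]
      ring
    · refine ⟨⟨Rk2.off θ q W (k.1 + 1) - 1, by omega⟩, ⟨Rk2.off θ q W (l.1 + 1) - 1, by omega⟩,
        ?_, ?_, ?_, ?_, ?_⟩
      · intro j hj
        have hj1 : j.1 + 1 ≠ Rk2.off θ q W (k.1 + 1) := by
          intro hh
          apply hj
          apply Fin.ext
          show j.1 = Rk2.off θ q W (k.1 + 1) - 1
          omega
        have h9 := hub (j.1 + 1) (by omega) (by have := j.isLt; omega) hj1
        show phiW (fun _ => (1 : ℤ)) (W.flatMap (Rk2.blk θ q)) (j.1 + 1)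
          < phiW (fun _ => (1 : ℤ)) (W.flatMap (Rk2.blk θ q)) (Rk2.off θ q W (k.1 + 1) - 1 + 1)
        rw [Nat.sub_add_cancel hK1, hphiK]
        exact h9
      · intro j hj
        have hj1 : j.1 + 1 ≠ Rk2.off θ q W (l.1 + 1) := by
          intro hh
          apply hj
          apply Fin.ext
          show j.1 = Rk2.off θ q W (l.1 + 1) - 1
          omega
        have h9 := hlb (j.1 + 1) (by omega) (by have := j.isLt; omega) hj1
        show phiW (fun _ => (1 : ℤ)) (W.flatMap (Rk2.blk θ q)) (Rk2.off θ q W (l.1 + 1) - 1 + 1)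
          < phiW (fun _ => (1 : ℤ)) (W.flatMap (Rk2.blk θ q)) (j.1 + 1)
        rw [Nat.sub_add_cancel hL1, hphiL]
        exact h9
      · show ((W.flatMap (Rk2.blk θ q))[Rk2.off θ q W (k.1 + 1) - 1]'(by omega)).1
          ≠ ((W.flatMap (Rk2.blk θ q))[(Rk2.off θ q W (k.1 + 1) - 1 + 1)
              % (W.flatMap (Rk2.blk θ q)).length]'(Nat.mod_lt _ hNpos)).1
        rw [hgetK, hgetKP, hsgk, hsgkp]
        cases hqa : q (W[k.1]'k.isLt).1
        · have hqb : q (W[(k.1 + 1) % W.length]'hkpr).1 = true := by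
            revert hqab'
            rw [hqa]
            cases q (W[(k.1 + 1) % W.length]'hkpr).1 <;> simp
          rw [hqb]
          simp
        · have hqb : q (W[(k.1 + 1) % W.length]'hkpr).1 = false := by
            revert hqab'
            rw [hqa]
            cases q (W[(k.1 + 1) % W.length]'hkpr).1 <;> simp
          rw [hqb]
          simp
      · show ((W.flatMap (Rk2.blk θ q))[Rk2.off θ q W (l.1 + 1) - 1]'(by omega)).1
          ≠ ((W.flatMap (Rk2.blk θ q))[(Rk2.off θ q W (l.1 + 1) - 1 + 1)
              % (W.flatMap (Rk2.blk θ q)).length]'(Nat.mod_lt _ hNpos)).1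
        rw [hgetL, hgetLP, hsgl, hsglp]
        cases hqc : q (W[l.1]'l.isLt).1
        · have hqd : q (W[(l.1 + 1) % W.length]'hlpr).1 = true := by
            revert hqcd'
            rw [hqc]
            cases q (W[(l.1 + 1) % W.length]'hlpr).1 <;> simp
          rw [hqd]
          simp
        · have hqd : q (W[(l.1 + 1) % W.length]'hlpr).1 = false := by
            revert hqcd'
            rw [hqc]
            cases q (W[(l.1 + 1) % W.length]'hlpr).1 <;> simp
          rw [hqd]
          simp
      · refine ⟨none, Set.mem_inter ?_ ?_⟩
        · show (none : Option X) ∈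
            ({((W.flatMap (Rk2.blk θ q))[Rk2.off θ q W (k.1 + 1) - 1]'(by omega)).1,
              ((W.flatMap (Rk2.blk θ q))[(Rk2.off θ q W (k.1 + 1) - 1 + 1)
                % (W.flatMap (Rk2.blk θ q)).length]'(Nat.mod_lt _ hNpos)).1} : Set (Option X))
          rw [hgetK, hgetKP, hsgk, hsgkp]
          cases hqa : q (W[k.1]'k.isLt).1
          · simp
          · have hqb : q (W[(k.1 + 1) % W.length]'hkpr).1 = false := by
              revert hqab'
              rw [hqa]
              cases q (W[(k.1 + 1) % W.length]'hkpr).1 <;> simp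
            rw [hqb]
            simp
        · show (none : Option X) ∈
            ({((W.flatMap (Rk2.blk θ q))[Rk2.off θ q W (l.1 + 1) - 1]'(by omega)).1,
              ((W.flatMap (Rk2.blk θ q))[(Rk2.off θ q W (l.1 + 1) - 1 + 1)
                % (W.flatMap (Rk2.blk θ q)).length]'(Nat.mod_lt _ hNpos)).1} : Set (Option X))
          rw [hgetL, hgetLP, hsgl, hsglp]
          cases hqc : q (W[l.1]'l.isLt).1
          · have hqd : q (W[(l.1 + 1) % W.length]'hlpr).1 = true := by
              revert hqcd'
              rw [hqc]
              cases q (W[(l.1 + 1) % W.length]'hlpr).1 <;> simp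
            rw [hqd]
            simp
          · simp
  · -- the group-theoretic part
    have hrel : relWord (R.flatMap (Rk2.expand (θ := θ) (q := q)))
        = Rk2.phis θ q (relWord R) := Rk2.relWord_flatMap_expand hs R
    have hpsiphi : ∀ g2 : Coprod H (FreeGroup X), Rk2.psis θ (Rk2.phis θ q g2) = g2 := by
      intro g2
      have h0 := Rk2.psis_phis (H := H) (q := q) hs
      calc Rk2.psis θ (Rk2.phis θ q g2) = ((Rk2.psis θ).comp (Rk2.phis θ q)) g2 := rfl
        _ = g2 := by rw [h0]; rfl
    have key1 : ((QuotientGroup.mk' (Subgroup.normalClosure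
        {relWord (R.flatMap (Rk2.expand (θ := θ) (q := q)))})).comp (Rk2.phis θ q))
        (relWord R) = 1 := by
      simp only [MonoidHom.comp_apply, QuotientGroup.mk'_apply]
      rw [← hrel, QuotientGroup.eq_one_iff]
      exact Subgroup.subset_normalClosure (Set.mem_singleton _)
    have key2 : ((QuotientGroup.mk' (Subgroup.normalClosure {relWord R})).comp (Rk2.psis θ))
        (relWord (R.flatMap (Rk2.expand (θ := θ) (q := q)))) = 1 := by
      simp only [MonoidHom.comp_apply, QuotientGroup.mk'_apply]
      rw [hrel, hpsiphi, QuotientGroup.eq_one_iff]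
      exact Subgroup.subset_normalClosure (Set.mem_singleton _)
    have hle1 : Subgroup.normalClosure {relWord R} ≤
        ((QuotientGroup.mk' (Subgroup.normalClosure
          {relWord (R.flatMap (Rk2.expand (θ := θ) (q := q)))})).comp (Rk2.phis θ q)).ker := by
      apply Subgroup.normalClosure_le_normal
      intro g hg
      rw [Set.mem_singleton_iff] at hg
      rw [hg]
      exact key1
    have hle2 : Subgroup.normalClosure {relWord (R.flatMap (Rk2.expand (θ := θ) (q := q)))} ≤
        ((QuotientGroup.mk' (Subgroup.normalClosure {relWord R})).comp (Rk2.psis θ)).ker := by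
      apply Subgroup.normalClosure_le_normal
      intro g hg
      rw [Set.mem_singleton_iff] at hg
      rw [hg]
      exact key2
    refine ⟨QuotientGroup.lift _ _ (fun g hg => hle1 hg),
      QuotientGroup.lift _ _ (fun g hg => hle2 hg), ?_, ?_⟩
    · apply MonoidHom.ext
      intro z
      refine QuotientGroup.induction_on z ?_
      intro g
      show QuotientGroup.lift _ _ (fun g hg => hle2 hg)
        (QuotientGroup.lift _ _ (fun g hg => hle1 hg) (QuotientGroup.mk g)) = QuotientGroup.mk g
      rw [QuotientGroup.lift_mk']
      simp only [MonoidHom.comp_apply, QuotientGroup.mk'_apply]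
      rw [QuotientGroup.lift_mk']
      simp only [MonoidHom.comp_apply, QuotientGroup.mk'_apply]
      rw [hpsiphi]
    · intro z1 z2 hz
      have hretr : ∀ z : relGroup R, QuotientGroup.lift _ _ (fun g hg => hle2 hg)
          (QuotientGroup.lift _ _ (fun g hg => hle1 hg) z) = z := by
        intro z
        refine QuotientGroup.induction_on z ?_
        intro g
        rw [QuotientGroup.lift_mk']
        simp only [MonoidHom.comp_apply, QuotientGroup.mk'_apply]
        rw [QuotientGroup.lift_mk']
        simp only [MonoidHom.comp_apply, QuotientGroup.mk'_apply]
        rw [hpsiphi]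
      have h1 := congrArg (QuotientGroup.lift _ _ (fun g hg => hle2 hg)) hz
      exact (hretr z1).symm.trans (h1.trans (hretr z2))
end

section
/- Let H be a group and P = ⟨x, H; R⟩ a relative one-relator presentation whose x-skeleton W has the unique min property with respect to an admissible strict weight function. Then the natural homomorphism ν : H → G(P) is injective. -/
open Monoid

/-- `W` has the unique min property with respect to `θ`: `θ` is an admissible
strict weight function for `W`, the graph of `W` has a unique minimum at `l`,
and `W` is reduced at the minimum (`x_l ≠ x_{l+1}`, subscripts mod `r`). -/
def UniqueMinWith {X : Type*} (θ : X → ℤ) (W : List (X × Bool)) : Prop :=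
  W ≠ [] ∧ IsWeightFun θ ∧ IsStrictWeight θ ∧ IsAdmissible θ W ∧
  ∃ l : Fin W.length,
    (∀ j : Fin W.length, j ≠ l → phiW θ W (l.1 + 1) < phiW θ W (j.1 + 1)) ∧
    (W.get l).1 ≠ (W.get (succIdx W l)).1

/-- `W` has the unique min property with respect to some admissible strict
weight function. -/
def HasUniqueMin {X : Type*} (W : List (X × Bool)) : Prop :=
  ∃ θ : X → ℤ, UniqueMinWith θ W


namespace UMKey

variable {X H : Type*} [Group H]
set_option linter.unusedSectionVars false

/-- signed weight of a letter -/
def wt (θ : X → ℤ) (x : X) (ε : Bool) : ℤ := if ε then θ x else -θ x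

/-- total signed weight of a relator list -/
def SL (θ : X → ℤ) (L : List (X × Bool × H)) : ℤ :=
  (L.map fun T => wt θ T.1 T.2.1).sum

@[simp] lemma SL_nil (θ : X → ℤ) : SL θ ([] : List (X × Bool × H)) = 0 := rfl

@[simp] lemma SL_cons (θ : X → ℤ) (T : X × Bool × H) (L : List (X × Bool × H)) :
    SL θ (T :: L) = wt θ T.1 T.2.1 + SL θ L := by
  simp [SL]

@[simp] lemma SL_append (θ : X → ℤ) (L₁ L₂ : List (X × Bool × H)) :
    SL θ (L₁ ++ L₂) = SL θ L₁ + SL θ L₂ := by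
  simp [SL]

/-- the evaluation of the "function part" of the image of a relator list in the
wreath product, with prefix height `t`, at coordinate `m`. -/
def ev (A : X → ℤ → H) (θ : X → ℤ) : List (X × Bool × H) → ℤ → ℤ → H
  | [], _, _ => 1
  | (x, ε, h) :: L, t, m =>
      (if ε then A x (m - t) * (if m - t = θ x then h else 1)
       else (A x (m - t + θ x))⁻¹ * (if m - t = -θ x then h else 1)) *
        ev A θ L (t + wt θ x ε) m

@[simp] lemma ev_nil (A : X → ℤ → H) (θ : X → ℤ) (t m : ℤ) : ev A θ [] t m = 1 := rfl

lemma ev_cons (A : X → ℤ → H) (θ : X → ℤ) (x : X) (ε : Bool) (h : H)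
    (L : List (X × Bool × H)) (t m : ℤ) :
    ev A θ ((x, ε, h) :: L) t m =
      (if ε then A x (m - t) * (if m - t = θ x then h else 1)
       else (A x (m - t + θ x))⁻¹ * (if m - t = -θ x then h else 1)) *
        ev A θ L (t + wt θ x ε) m := rfl

lemma ev_append (A : X → ℤ → H) (θ : X → ℤ) (L₁ L₂ : List (X × Bool × H)) (t m : ℤ) :
    ev A θ (L₁ ++ L₂) t m = ev A θ L₁ t m * ev A θ L₂ (t + SL θ L₁) m := by
  induction L₁ generalizing t with
  | nil => simp
  | cons T L ih =>
      obtain ⟨x, ε, h⟩ := T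
      rw [List.cons_append, ev_cons, ev_cons, ih, mul_assoc, SL_cons, ← add_assoc]

/-- the set of points of the unknown functions accessed by `ev`. -/
def acc (θ : X → ℤ) : List (X × Bool × H) → ℤ → ℤ → Set (X × ℤ)
  | [], _, _ => ∅
  | (x, ε, _) :: L, t, m =>
      insert (x, if ε then m - t else m - t + θ x) (acc θ L (t + wt θ x ε) m)

lemma ev_congr {A₁ A₂ : X → ℤ → H} (θ : X → ℤ) (L : List (X × Bool × H)) (t m : ℤ)
    (hA : ∀ q ∈ acc (H := H) θ L t m, A₁ q.1 q.2 = A₂ q.1 q.2) :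
    ev A₁ θ L t m = ev A₂ θ L t m := by
  induction L generalizing t with
  | nil => rfl
  | cons T L ih =>
      obtain ⟨x, ε, h⟩ := T
      have h1 : ∀ q ∈ acc (H := H) θ L (t + wt θ x ε) m, A₁ q.1 q.2 = A₂ q.1 q.2 := by
        intro q hq; exact hA q (Set.mem_insert_iff.2 (Or.inr hq))
      rw [ev_cons, ev_cons, ih _ h1]
      congr 1
      cases ε with
      | true =>
          have := hA (x, m - t) (Set.mem_insert_iff.2 (Or.inl (by simp)))
          simp only at this
          simp [this]
      | false =>
          have := hA (x, m - t + θ x) (Set.mem_insert_iff.2 (Or.inl (by simp)))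
          simp only at this
          simp [this]

/-- characterization of the accessed points. -/
lemma acc_spec (θ : X → ℤ) (L : List (X × Bool × H)) (t m : ℤ) (q : X × ℤ)
    (hq : q ∈ acc (H := H) θ L t m) :
    ∃ i : ℕ, ∃ hi : i < L.length, q.1 = (L[i]).1 ∧
      q.2 = m - (if (L[i]).2.1 then t + SL θ (L.take i) else t + SL θ (L.take (i + 1))) := by
  induction L generalizing t with
  | nil => simp [acc] at hq
  | cons T L ih =>
      obtain ⟨x, ε, h⟩ := T
      rcases Set.mem_insert_iff.1 hq with hq | hq
      · subst hq
        refine ⟨0, by simp, by simp, ?_⟩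
        cases ε with
        | true => simp
        | false => simp [wt]; ring
      · obtain ⟨i, hi, h1, h2⟩ := ih (t + wt θ x ε) hq
        refine ⟨i + 1, by simpa using hi, ?_, ?_⟩
        · simpa using h1
        · rw [h2]
          have hl : ∀ j : ℕ, SL θ (((x, ε, h) :: L).take (j + 1)) = wt θ x ε + SL θ (L.take j) := by
            intro j; simp [List.take_succ_cons]
          cases hb : ((L[i]).2.1) with
          | true => simp [hb, hl, add_assoc]
          | false => simp [hb, hl, add_assoc]

/-- if all accessed values are `1` and no constant is hit, `ev` is trivial. -/
lemma ev_triv (A : X → ℤ → H) (θ : X → ℤ) (L : List (X × Bool × H)) (t m : ℤ)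
    (hA : ∀ q ∈ acc (H := H) θ L t m, A q.1 q.2 = 1)
    (hδ : ∀ j : ℕ, j < L.length → m ≠ t + SL θ (L.take (j + 1))) :
    ev A θ L t m = 1 := by
  induction L generalizing t with
  | nil => rfl
  | cons T L ih =>
      obtain ⟨x, ε, h⟩ := T
      have hδ0 := hδ 0 (by simp)
      have hδ' : ∀ j : ℕ, j < L.length → m ≠ t + wt θ x ε + SL θ (L.take (j + 1)) := by
        intro j hj
        have := hδ (j + 1) (by simpa using hj)
        simpa [List.take_succ_cons, add_assoc] using this
      have htail : ∀ q ∈ acc (H := H) θ L (t + wt θ x ε) m, A q.1 q.2 = 1 := by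
        intro q hq; exact hA q (Set.mem_insert_iff.2 (Or.inr hq))
      rw [ev_cons, ih _ htail hδ', mul_one]
      simp only [List.take_succ_cons, List.take_zero, SL_cons, SL_nil, add_zero] at hδ0
      cases ε with
      | true =>
          have ha := hA (x, m - t) (Set.mem_insert_iff.2 (Or.inl (by simp)))
          simp only at ha
          have hne : m - t ≠ θ x := by
            intro hc; apply hδ0; simp [wt]; omega
          simp [ha, hne]
      | false =>
          have ha := hA (x, m - t + θ x) (Set.mem_insert_iff.2 (Or.inl (by simp)))
          simp only at ha
          have hne : m - t ≠ -θ x := by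
            intro hc; apply hδ0; simp [wt]; omega
          simp [ha, hne]

end UMKey

section Part2
open UMKey
open scoped Classical

variable {X H : Type*} [Group H]
set_option linter.unusedSectionVars false

namespace UMKey

variable (θ : X → ℤ) (L₁ L₂ : List (X × Bool × H)) (u : X) (εl : Bool) (hu : H)

/-- height at the start of the pivot letter -/
def phL : ℤ := SL θ L₁

/-- the minimum height `μ` -/
def muv : ℤ := phL θ L₁ + wt θ u εl

/-- anchor of the pivot letter -/
def alphaP : ℤ := if εl then phL θ L₁ else muv θ L₁ u εl

/-- base point of the recursion -/
def n0 : ℤ := muv θ L₁ u εl - alphaP θ L₁ u εl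

/-- extend a single unknown function to all letters -/
noncomputable def toA (B : ℤ → H) : X → ℤ → H := fun x => if x = u then B else fun _ => 1

/-- the value solving the pivot equation at coordinate `μ + k` -/
noncomputable def vv (k : ℕ) (B : ℤ → H) : H :=
  if εl then
    (ev (toA u B) θ L₁ 0 (muv θ L₁ u εl + k))⁻¹ *
      (ev (toA u B) θ L₂ (muv θ L₁ u εl) (muv θ L₁ u εl + k))⁻¹ *
      (if (muv θ L₁ u εl + (k : ℤ)) = muv θ L₁ u εl then hu else 1)⁻¹
  else
    (if (muv θ L₁ u εl + (k : ℤ)) = muv θ L₁ u εl then hu else 1) *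
      ev (toA u B) θ L₂ (muv θ L₁ u εl) (muv θ L₁ u εl + k) *
      ev (toA u B) θ L₁ 0 (muv θ L₁ u εl + k)

/-- the recursively constructed unknown function, with fuel -/
noncomputable def Fk : ℕ → ℤ → H
  | 0 => fun _ => 1
  | k + 1 => Function.update (Fk k) (n0 θ L₁ u εl + k) (vv θ L₁ L₂ u εl hu k (Fk k))

/-- the unknown function assigned to the pivot letter -/
noncomputable def Au (n : ℤ) : H :=
  if n < n0 θ L₁ u εl then 1 else Fk θ L₁ L₂ u εl hu ((n - n0 θ L₁ u εl).toNat + 1) n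

lemma Fk_stable (k j : ℕ) (n : ℤ) (hn : n < n0 θ L₁ u εl + k) :
    Fk θ L₁ L₂ u εl hu (k + j) n = Fk θ L₁ L₂ u εl hu k n := by
  induction j with
  | zero => rfl
  | succ j ih =>
      have : n ≠ n0 θ L₁ u εl + ((k + j : ℕ) : ℤ) := by push_cast; push_cast at hn; omega
      rw [show k + (j + 1) = (k + j) + 1 from rfl, Fk, Function.update_of_ne this, ih]

lemma Au_eq_Fk (k : ℕ) (n : ℤ) (hn : n < n0 θ L₁ u εl + k) :
    Au θ L₁ L₂ u εl hu n = Fk θ L₁ L₂ u εl hu k n := by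
  by_cases h : n < n0 θ L₁ u εl
  · rw [Au, if_pos h]
    have := Fk_stable θ L₁ L₂ u εl hu 0 k n (by push_cast; omega)
    rw [Nat.zero_add] at this
    rw [this]; rfl
  · push_neg at h
    rw [Au, if_neg (by omega)]
    set K := (n - n0 θ L₁ u εl).toNat with hK
    have hKn : (K : ℤ) = n - n0 θ L₁ u εl := Int.toNat_of_nonneg (by omega)
    have h1 : n < n0 θ L₁ u εl + ((K + 1 : ℕ) : ℤ) := by push_cast; omega
    rcases Nat.le_total k (K + 1) with hle | hle
    · obtain ⟨j, hj⟩ := Nat.le.dest hle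
      rw [← hj, Fk_stable θ L₁ L₂ u εl hu k j n hn]
    · obtain ⟨j, hj⟩ := Nat.le.dest hle
      rw [← hj, Fk_stable θ L₁ L₂ u εl hu (K + 1) j n h1]

lemma Au_pivot (k : ℕ) :
    Au θ L₁ L₂ u εl hu (n0 θ L₁ u εl + k) =
      vv θ L₁ L₂ u εl hu k (Fk θ L₁ L₂ u εl hu k) := by
  rw [Au, if_neg (by omega)]
  have : (n0 θ L₁ u εl + (k : ℤ) - n0 θ L₁ u εl).toNat = k := by omega
  rw [this, Fk, Function.update_self]

end UMKey
end Part2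

section Part3
open scoped Classical

variable {X H : Type*} [Group H]
set_option linter.unusedSectionVars false
set_option maxHeartbeats 1000000

namespace UMKey

variable (θ : X → ℤ) (L₁ L₂ : List (X × Bool × H)) (u : X) (εl : Bool) (hu : H)

@[simp] lemma toA_same (B : ℤ → H) : toA u B u = B := if_pos rfl

lemma toA_ne (B : ℤ → H) {x : X} (h : x ≠ u) : toA u B x = fun _ => 1 := if_neg h

lemma Au_neg {n : ℤ} (h : n < n0 θ L₁ u εl) : Au θ L₁ L₂ u εl hu n = 1 := if_pos h

theorem master
    (Hanchor : ∀ i, ∀ hi : i < (L₁ ++ (u, εl, hu) :: L₂).length, i ≠ L₁.length →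
      ((L₁ ++ (u, εl, hu) :: L₂)[i]).1 = u →
      alphaP θ L₁ u εl <
        (if ((L₁ ++ (u, εl, hu) :: L₂)[i]).2.1
         then SL θ ((L₁ ++ (u, εl, hu) :: L₂).take i)
         else SL θ ((L₁ ++ (u, εl, hu) :: L₂).take (i + 1))))
    (Hmin : ∀ j, j ≤ (L₁ ++ (u, εl, hu) :: L₂).length →
      muv θ L₁ u εl ≤ SL θ ((L₁ ++ (u, εl, hu) :: L₂).take j))
    (m : ℤ) :
    ev (toA u (Au θ L₁ L₂ u εl hu)) θ (L₁ ++ (u, εl, hu) :: L₂) 0 m = 1 := by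
  have hRlen : (L₁ ++ (u, εl, hu) :: L₂).length = L₁.length + 1 + L₂.length := by
    simp; omega
  have hRtake : ∀ i, i ≤ L₁.length →
      (L₁ ++ (u, εl, hu) :: L₂).take i = L₁.take i :=
    fun i hi => List.take_append_of_le_length hi
  have hRC : L₁ ++ (u, εl, hu) :: L₂ = (L₁ ++ [(u, εl, hu)]) ++ L₂ := by simp
  have hRtake2 : ∀ j : ℕ, SL θ ((L₁ ++ (u, εl, hu) :: L₂).take (L₁.length + 1 + j)) =
      muv θ L₁ u εl + SL θ (L₂.take j) := by
    intro j
    rw [hRC]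
    have hlen : L₁.length + 1 + j = (L₁ ++ [(u, εl, hu)]).length + j := by simp
    rw [hlen, List.take_length_add_append]
    simp [muv, phL, add_assoc]
  have hget1 : ∀ i, ∀ h : i < L₁.length,
      ((L₁ ++ (u, εl, hu) :: L₂)[i]'(by rw [hRlen]; omega)) = L₁[i] :=
    fun i h => List.getElem_append_left h
  have hget2 : ∀ i, ∀ h : i < L₂.length,
      ((L₁ ++ (u, εl, hu) :: L₂)[L₁.length + 1 + i]'(by rw [hRlen]; omega)) = L₂[i] := by
    intro i h
    rw [List.getElem_append_right (by omega)]
    have h2 : L₁.length + 1 + i - L₁.length = i + 1 := by omega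
    simp [h2]
  -- bound on accessed points of the left part
  have hacc1 : ∀ q ∈ acc (H := H) θ L₁ 0 m, q.1 = u → q.2 < m - alphaP θ L₁ u εl := by
    intro q hq hqu
    obtain ⟨i, hi, hq1, hq2⟩ := acc_spec θ L₁ 0 m q hq
    have h1 : (L₁ ++ (u, εl, hu) :: L₂)[i]'(by rw [hRlen]; omega) = L₁[i] := hget1 i hi
    have hanc := Hanchor i (by rw [hRlen]; omega) (by omega) (by rw [h1, ← hq1, hqu])
    rw [h1] at hanc
    rw [hRtake i (by omega), hRtake (i + 1) (by omega)] at hanc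
    rw [hq2]
    rcases hb : (L₁[i]).2.1 with _ | _ <;> rw [hb] at hanc <;> simp [hb] at * <;> omega
  -- bound on accessed points of the right part
  have hacc2 : ∀ q ∈ acc (H := H) θ L₂ (muv θ L₁ u εl) m, q.1 = u →
      q.2 < m - alphaP θ L₁ u εl := by
    intro q hq hqu
    obtain ⟨i, hi, hq1, hq2⟩ := acc_spec θ L₂ (muv θ L₁ u εl) m q hq
    have h1 : (L₁ ++ (u, εl, hu) :: L₂)[L₁.length + 1 + i]'(by rw [hRlen]; omega) = L₂[i] :=
      hget2 i hi
    have hanc := Hanchor (L₁.length + 1 + i) (by rw [hRlen]; omega) (by omega)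
      (by rw [h1, ← hq1, hqu])
    rw [h1] at hanc
    rw [hRtake2 i] at hanc
    have hta : L₁.length + 1 + i + 1 = L₁.length + 1 + (i + 1) := by omega
    rw [hta, hRtake2 (i + 1)] at hanc
    rw [hq2]
    rcases hb : (L₂[i]).2.1 with _ | _ <;> rw [hb] at hanc <;> simp [hb] at * <;> omega
  -- the δ constants in the two side parts are never hit below the maximum needed
  rw [ev_append, ev_cons]
  simp only [zero_add]
  have hbase : SL θ L₁ + wt θ u εl = muv θ L₁ u εl := rfl
  rw [hbase]
  rcases lt_or_ge m (muv θ L₁ u εl) with hlt | hge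
  · -- m below the minimum: everything is trivial
    have hT1 : ev (toA u (Au θ L₁ L₂ u εl hu)) θ L₁ 0 m = 1 := by
      apply ev_triv
      · intro q hq
        by_cases hqu : q.1 = u
        · rw [hqu, toA_same]
          exact Au_neg θ L₁ L₂ u εl hu (by have := hacc1 q hq hqu; simp [n0]; omega)
        · rw [toA_ne u _ hqu]
      · intro j hj
        rw [zero_add, ← hRtake (j + 1) (by omega)]
        have := Hmin (j + 1) (by rw [hRlen]; omega)
        omega
    have hT2 : ev (toA u (Au θ L₁ L₂ u εl hu)) θ L₂ (muv θ L₁ u εl) m = 1 := by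
      apply ev_triv
      · intro q hq
        by_cases hqu : q.1 = u
        · rw [hqu, toA_same]
          exact Au_neg θ L₁ L₂ u εl hu (by have := hacc2 q hq hqu; simp [n0]; omega)
        · rw [toA_ne u _ hqu]
      · intro j hj
        rw [← hRtake2 (j + 1)]
        have := Hmin (L₁.length + 1 + (j + 1)) (by rw [hRlen]; omega)
        omega
    rw [hT1, hT2, one_mul, mul_one, toA_same]
    cases εl with
    | true =>
        have hmw : muv θ L₁ u (true : Bool) = SL θ L₁ + θ u := by
          simp [muv, phL, wt]
        have hn0 : n0 θ L₁ u (true : Bool) = muv θ L₁ u (true : Bool) - SL θ L₁ := by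
          simp [n0, alphaP, phL]
        have h1 : m - SL θ L₁ < n0 θ L₁ u (true : Bool) := by omega
        have h2 : m - SL θ L₁ ≠ θ u := by omega
        simp only [if_pos]
        rw [Au_neg θ L₁ L₂ u true hu h1, if_neg h2, one_mul]
    | false =>
        have hmw : muv θ L₁ u (false : Bool) = SL θ L₁ - θ u := by
          simp [muv, phL, wt, sub_eq_add_neg]
        have hn0 : n0 θ L₁ u (false : Bool) = 0 := by
          simp [n0, alphaP, phL]
        have h1 : m - SL θ L₁ + θ u < n0 θ L₁ u (false : Bool) := by omega
        have h2 : m - SL θ L₁ ≠ -θ u := by omega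
        simp only [Bool.false_eq_true, if_false]
        rw [Au_neg θ L₁ L₂ u false hu h1, if_neg h2, inv_one, one_mul]
  · -- m at or above the minimum: use the recursive solution
    set k : ℕ := (m - muv θ L₁ u εl).toNat with hk
    have hm : m = muv θ L₁ u εl + (k : ℤ) := by rw [hk]; omega
    rw [hm]
    have hT1 : ev (toA u (Au θ L₁ L₂ u εl hu)) θ L₁ 0 (muv θ L₁ u εl + (k : ℤ)) =
        ev (toA u (Fk θ L₁ L₂ u εl hu k)) θ L₁ 0 (muv θ L₁ u εl + (k : ℤ)) := by
      apply ev_congr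
      intro q hq
      by_cases hqu : q.1 = u
      · rw [hqu, toA_same, toA_same]
        apply Au_eq_Fk
        have := hacc1 q (by rw [← hm] at hq; exact hq) hqu
        simp only [n0] at *
        omega
      · rw [toA_ne u _ hqu, toA_ne u _ hqu]
    have hT2 : ev (toA u (Au θ L₁ L₂ u εl hu)) θ L₂ (muv θ L₁ u εl) (muv θ L₁ u εl + (k : ℤ)) =
        ev (toA u (Fk θ L₁ L₂ u εl hu k)) θ L₂ (muv θ L₁ u εl) (muv θ L₁ u εl + (k : ℤ)) := by
      apply ev_congr
      intro q hq
      by_cases hqu : q.1 = u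
      · rw [hqu, toA_same, toA_same]
        apply Au_eq_Fk
        have := hacc2 q (by rw [← hm] at hq; exact hq) hqu
        simp only [n0] at *
        omega
      · rw [toA_ne u _ hqu, toA_ne u _ hqu]
    rw [hT1, hT2, toA_same]
    cases εl with
    | true =>
        have hmw : muv θ L₁ u (true : Bool) = SL θ L₁ + θ u := by
          simp [muv, phL, wt]
        have hn0 : n0 θ L₁ u (true : Bool) = muv θ L₁ u (true : Bool) - SL θ L₁ := by
          simp [n0, alphaP, phL]
        have harg : muv θ L₁ u (true : Bool) + (k : ℤ) - SL θ L₁ =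
            n0 θ L₁ u (true : Bool) + (k : ℤ) := by omega
        simp only [if_pos]
        rw [harg]
        have hif : (if n0 θ L₁ u (true : Bool) + (k : ℤ) = θ u then hu else 1) =
            (if muv θ L₁ u (true : Bool) + (k : ℤ) = muv θ L₁ u (true : Bool) then hu else 1) :=
          if_congr (by constructor <;> (intro; omega)) rfl rfl
        rw [hif, Au_pivot]
        rw [vv, if_pos rfl]
        group
    | false =>
        have hmw : muv θ L₁ u (false : Bool) = SL θ L₁ - θ u := by
          simp [muv, phL, wt, sub_eq_add_neg]
        have hn0 : n0 θ L₁ u (false : Bool) = 0 := by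
          simp [n0, alphaP, phL]
        have harg : muv θ L₁ u (false : Bool) + (k : ℤ) - SL θ L₁ + θ u =
            n0 θ L₁ u (false : Bool) + (k : ℤ) := by omega
        simp only [Bool.false_eq_true, if_false]
        rw [harg]
        have hif : (if muv θ L₁ u (false : Bool) + (k : ℤ) - SL θ L₁ = -θ u then hu else 1) =
            (if muv θ L₁ u (false : Bool) + (k : ℤ) = muv θ L₁ u (false : Bool) then hu else 1) :=
          if_congr (by constructor <;> (intro; omega)) rfl rfl
        rw [hif, Au_pivot]
        rw [vv, if_neg Bool.false_ne_true]
        group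

end UMKey
end Part3

section Part4
variable {X H : Type*} [Group H]
set_option linter.unusedSectionVars false
set_option maxHeartbeats 1000000

namespace UMKey

lemma SL_take_succ (θ : X → ℤ) (R : List (X × Bool × H)) (j : ℕ) (hj : j < R.length) :
    SL θ (R.take (j + 1)) = SL θ (R.take j) + wt θ (R[j]).1 (R[j]).2.1 := by
  rw [List.take_succ, List.getElem?_eq_getElem hj]
  rw [show (some (R[j]'hj)).toList = [R[j]'hj] from rfl, SL_append]
  simp [SL]

theorem key_anchor_min (θ : X → ℤ) (R : List (X × Bool × H)) (lN : ℕ) (hlN : lN < R.length)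
    (hstrict : ∀ x, θ x ≠ 0)
    (hadm : SL θ R = 0)
    (hmin : ∀ j, j < R.length → j ≠ lN → SL θ (R.take (lN + 1)) < SL θ (R.take (j + 1)))
    (hred : (R[lN]'hlN).1 ≠ (R[(lN + 1) % R.length]'(Nat.mod_lt _ (by omega))).1) :
    (∀ j, j ≤ R.length → SL θ (R.take (lN + 1)) ≤ SL θ (R.take j)) ∧
    (∀ i, ∀ hi : i < R.length, i ≠ lN → ((R[i]'hi)).1 = (R[lN]'hlN).1 →
      (if (R[lN]'hlN).2.1 then SL θ (R.take lN) else SL θ (R.take (lN + 1))) <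
        (if ((R[i]'hi)).2.1 then SL θ (R.take i) else SL θ (R.take (i + 1)))) := by
  have hlen0 : SL θ (R.take R.length) = 0 := by rw [List.take_length]; exact hadm
  have hzero : SL θ (R.take 0) = 0 := by simp
  -- the minimum over all heights
  have hminle : ∀ j, j ≤ R.length → SL θ (R.take (lN + 1)) ≤ SL θ (R.take j) := by
    intro j hj
    match j with
    | 0 =>
        rw [hzero, ← hlen0]
        rcases eq_or_ne (R.length - 1) lN with he | hne
        · have : lN + 1 = R.length := by omega
          rw [this]
        · have := hmin (R.length - 1) (by omega) hne
          have h2 : R.length - 1 + 1 = R.length := by omega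
          rw [h2] at this
          omega
    | (j' + 1) =>
        rcases eq_or_ne j' lN with he | hne
        · rw [he]
        · exact le_of_lt (hmin j' (by omega) hne)
  -- uniqueness of the minimum among positive indices
  have huniq : ∀ j, j ≤ R.length → 1 ≤ j → SL θ (R.take j) = SL θ (R.take (lN + 1)) →
      j = lN + 1 := by
    intro j hj h1 he
    by_contra hne
    have := hmin (j - 1) (by omega) (by omega)
    have h2 : j - 1 + 1 = j := by omega
    rw [h2] at this
    omega
  -- the zero endpoint case
  have hzcase : SL θ (R.take (lN + 1)) = 0 → lN + 1 = R.length := by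
    intro h0
    exact (huniq R.length (le_refl _) (by omega) (by rw [hlen0, h0])).symm
  have hgetc : ∀ i j : ℕ, ∀ hi : i < R.length, ∀ hj : j < R.length, i = j →
      R[i]'hi = R[j]'hj := by
    intro i j hi hj h
    subst h
    rfl
  -- r ≥ 2
  have hr2 : 2 ≤ R.length := by
    by_contra hr
    have hr1 : R.length = 1 := by omega
    have hl0 : lN = 0 := by omega
    have hmod : (lN + 1) % R.length = lN := by rw [hr1, hl0]
    have he := hgetc ((lN + 1) % R.length) lN (Nat.mod_lt _ (by omega)) hlN hmod
    exact hred (by rw [he])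
  -- reducedness in the two cases
  have hredin : ∀ h : lN + 1 < R.length, (R[lN]'hlN).1 ≠ (R[lN + 1]'h).1 := by
    intro h hc
    have he := hgetc ((lN + 1) % R.length) (lN + 1) (Nat.mod_lt _ (by omega)) (by omega)
      (Nat.mod_eq_of_lt h)
    exact hred (by rw [he]; exact hc)
  have hredend : lN + 1 = R.length → (R[lN]'hlN).1 ≠ (R[0]'(by omega : (0:ℕ) < R.length)).1 := by
    intro h hc
    have hmod : (lN + 1) % R.length = 0 := by rw [h, Nat.mod_self]
    have he := hgetc ((lN + 1) % R.length) 0 (Nat.mod_lt _ (by omega)) (by omega) hmod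
    exact hred (by rw [he]; exact hc)
  -- height at the left of the pivot is strictly above the minimum
  have hphil : SL θ (R.take (lN + 1)) < SL θ (R.take lN) := by
    rcases Nat.eq_zero_or_pos lN with h0 | hpos
    · subst h0
      rw [hzero]
      rcases lt_or_ge (SL θ (R.take (0 + 1))) 0 with h | h
      · exact h
      · exfalso
        have hle := hminle R.length (le_refl _)
        rw [hlen0] at hle
        have he : SL θ (R.take (0 + 1)) = 0 := by omega
        have := hzcase he
        omega
    · have := hmin (lN - 1) (by omega) (by omega)
      have h2 : lN - 1 + 1 = lN := by omega
      rw [h2] at this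
      exact this
  refine ⟨hminle, ?_⟩
  intro i hi hine hsame
  have hstep_l := SL_take_succ θ R lN hlN
  have hstep_i := SL_take_succ θ R i hi
  rw [hsame] at hstep_i
  -- exclude `φ i = μ` when the letter is the pivot letter
  have hnotmin_i : SL θ (R.take i) ≠ SL θ (R.take (lN + 1)) := by
    intro he
    rcases Nat.eq_zero_or_pos i with h0 | hpos
    · subst h0
      rw [hzero] at he
      have h1 : lN + 1 = R.length := hzcase he.symm
      exact hredend h1 (by rw [← hsame])
    · have := huniq i (by omega) (by omega) he
      subst this
      have hlt : lN + 1 < R.length := hi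
      exact hredin hlt (by rw [← hsame])
  have hnotmin_i1 : i + 1 ≤ R.length → i + 1 ≠ lN + 1 →
      SL θ (R.take (i + 1)) ≠ SL θ (R.take (lN + 1)) := by
    intro h1 h2 he
    exact h2 (huniq (i + 1) h1 (by omega) he)
  have hge_i : SL θ (R.take (lN + 1)) ≤ SL θ (R.take i) := hminle i (by omega)
  have hge_i1 : SL θ (R.take (lN + 1)) ≤ SL θ (R.take (i + 1)) := hminle (i + 1) (by omega)
  have hne_i1 : SL θ (R.take (i + 1)) ≠ SL θ (R.take (lN + 1)) :=
    hnotmin_i1 (by omega) (by omega)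
  rcases hb : ((R[lN]'hlN)).2.1 with _ | _ <;> rcases hbi : ((R[i]'hi)).2.1 with _ | _ <;>
      rw [hb] at hstep_l <;> rw [hbi] at hstep_i <;>
      simp only [wt, if_pos, Bool.false_eq_true, if_false] at hstep_l hstep_i <;>
      simp only [if_pos, Bool.false_eq_true, if_false] <;>
      omega

end UMKey
end Part4

section Part5
variable {X H : Type*} [Group H]
set_option linter.unusedSectionVars false
set_option maxHeartbeats 1000000

namespace UMKey

/-- translation automorphism of `ℤ → H` -/
def shiftAut (t : ℤ) : MulAut (ℤ → H) where
  toFun f := fun m => f (m - t)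
  invFun f := fun m => f (m + t)
  left_inv f := by funext m; simp
  right_inv f := by funext m; simp
  map_mul' f g := rfl

/-- the action of `ℤ` on `ℤ → H` by translations -/
def tau : Multiplicative ℤ →* MulAut (ℤ → H) where
  toFun t := shiftAut (Multiplicative.toAdd t)
  map_one' := by
    refine MulEquiv.ext fun f => ?_
    funext m
    simp [shiftAut]
  map_mul' t s := by
    refine MulEquiv.ext fun f => ?_
    funext m
    show f (m - Multiplicative.toAdd (t * s)) = f (m - Multiplicative.toAdd t - Multiplicative.toAdd s)
    congr 1
    simp [sub_sub]

/-- the embedding of `H` into the wreath-type product -/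
def embH : H →* ((ℤ → H) ⋊[tau] Multiplicative ℤ) :=
  SemidirectProduct.inl.comp (MonoidHom.mulSingle (fun _ : ℤ => H) 0)

lemma embH_injective : Function.Injective (embH (H := H)) := by
  intro a b hab
  have h2 := SemidirectProduct.inl_injective hab
  exact Pi.mulSingle_injective (M := fun _ : ℤ => H) 0 h2

/-- images of the generators -/
def ggK (A : X → ℤ → H) (θ : X → ℤ) (x : X) : (ℤ → H) ⋊[tau] Multiplicative ℤ :=
  ⟨A x, Multiplicative.ofAdd (θ x)⟩

/-- image of a single syllable `x^ε h` of the relator -/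
def stepK (A : X → ℤ → H) (θ : X → ℤ) (T : X × Bool × H) :
    (ℤ → H) ⋊[tau] Multiplicative ℤ :=
  ⟨fun m => if T.2.1 then A T.1 m * (if m = θ T.1 then T.2.2 else 1)
            else (A T.1 (m + θ T.1))⁻¹ * (if m = -θ T.1 then T.2.2 else 1),
   Multiplicative.ofAdd (wt θ T.1 T.2.1)⟩

lemma prodStep (A : X → ℤ → H) (θ : X → ℤ) :
    ∀ (L : List (X × Bool × H)) (t : ℤ) (f : ℤ → H),
    (⟨f, Multiplicative.ofAdd t⟩ : (ℤ → H) ⋊[tau] Multiplicative ℤ) *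
        (L.map (stepK A θ)).prod =
      ⟨fun m => f m * ev A θ L t m, Multiplicative.ofAdd (t + SL θ L)⟩ := by
  intro L
  induction L with
  | nil =>
      intro t f
      rw [List.map_nil, List.prod_nil, mul_one]
      ext m
      · simp
      · simp
  | cons T L ih =>
      intro t f
      obtain ⟨x, ε, h⟩ := T
      rw [List.map_cons, List.prod_cons, ← mul_assoc]
      have hstep : (⟨f, Multiplicative.ofAdd t⟩ : (ℤ → H) ⋊[tau] Multiplicative ℤ) *
          stepK A θ (x, ε, h) =
          ⟨fun m => f m *
            (if ε then A x (m - t) * (if m - t = θ x then h else 1)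
             else (A x (m - t + θ x))⁻¹ * (if m - t = -θ x then h else 1)),
           Multiplicative.ofAdd (t + wt θ x ε)⟩ := by
        ext m
        · show f m * (tau (Multiplicative.ofAdd t) ((stepK A θ (x, ε, h)).left)) m = _
          show f m * (stepK A θ (x, ε, h)).left (m - t) = _
          simp only [stepK]
        · show Multiplicative.ofAdd t * Multiplicative.ofAdd (wt θ x ε) = _
          rw [← ofAdd_add]; rfl
      rw [hstep, ih]
      ext m
      · show (f m *
            (if ε then A x (m - t) * (if m - t = θ x then h else 1)
             else (A x (m - t + θ x))⁻¹ * (if m - t = -θ x then h else 1))) *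
            ev A θ L (t + wt θ x ε) m =
          f m * ev A θ ((x, ε, h) :: L) t m
        rw [ev_cons, mul_assoc]
      · show Multiplicative.ofAdd (t + wt θ x ε + SL θ L) =
          Multiplicative.ofAdd (t + SL θ ((x, ε, h) :: L))
        rw [SL_cons, ← add_assoc]

lemma mk_one_eq_one :
    (⟨(1 : ℤ → H), Multiplicative.ofAdd 0⟩ : (ℤ → H) ⋊[tau] Multiplicative ℤ) = 1 := by
  ext m <;> simp

end UMKey
end Part5

section Part6
open Monoid
variable {X H : Type*} [Group H]
set_option linter.unusedSectionVars false
set_option maxHeartbeats 1000000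

namespace UMKey

@[simp] lemma tau_apply (t : Multiplicative ℤ) (f : ℤ → H) (m : ℤ) :
    tau t f m = f (m - Multiplicative.toAdd t) := rfl

@[simp] lemma embH_left (h : H) : (embH h).left = Pi.mulSingle (0 : ℤ) h := rfl

@[simp] lemma embH_right (h : H) : (embH h).right = 1 := rfl

@[simp] lemma ggK_left (A : X → ℤ → H) (θ : X → ℤ) (x : X) : (ggK A θ x).left = A x := rfl

@[simp] lemma ggK_right (A : X → ℤ → H) (θ : X → ℤ) (x : X) :
    (ggK A θ x).right = Multiplicative.ofAdd (θ x) := rfl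

lemma Phi_step (A : X → ℤ → H) (θ : X → ℤ) (T : X × Bool × H) :
    Coprod.lift embH (FreeGroup.lift (ggK A θ))
        (Coprod.inr (FreeGroup.mk [(T.1, T.2.1)]) * Coprod.inl T.2.2) = stepK A θ T := by
  obtain ⟨x, ε, h⟩ := T
  rw [map_mul, Coprod.lift_apply_inl, Coprod.lift_apply_inr]
  cases ε with
  | true =>
      rw [show FreeGroup.mk [(x, true)] = FreeGroup.of x from rfl, FreeGroup.lift_apply_of]
      ext m
      · show ((ggK A θ x).left * tau ((ggK A θ x).right) ((embH h).left)) m =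
          (stepK A θ (x, true, h)).left m
        simp only [ggK_left, ggK_right, embH_left, Pi.mul_apply, tau_apply, toAdd_ofAdd,
          Pi.mulSingle_apply, stepK, if_pos, sub_eq_zero]
      · show (ggK A θ x).right * (embH h).right = (stepK A θ (x, true, h)).right
        simp [stepK, wt]
  | false =>
      have h1 : FreeGroup.mk [(x, false)] = (FreeGroup.of x)⁻¹ := by
        rw [show FreeGroup.of x = FreeGroup.mk [(x, true)] from rfl, FreeGroup.inv_mk]
        rfl
      rw [h1, map_inv, FreeGroup.lift_apply_of]
      ext m
      · show (((ggK A θ x)⁻¹).left * tau (((ggK A θ x)⁻¹).right) ((embH h).left)) m =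
          (stepK A θ (x, false, h)).left m
        simp only [SemidirectProduct.inv_left, SemidirectProduct.inv_right, ggK_left, ggK_right,
          embH_left, Pi.mul_apply, tau_apply, toAdd_inv, toAdd_ofAdd, Pi.inv_apply,
          Pi.mulSingle_apply, stepK, Bool.false_eq_true, if_false, sub_neg_eq_add]
        exact congrArg _ (if_congr (by omega) rfl rfl)
      · show ((ggK A θ x)⁻¹).right * (embH h).right = (stepK A θ (x, false, h)).right
        simp [stepK, wt]

end UMKey
end Part6


open Monoid

set_option maxHeartbeats 1000000 in
/-- (Consequence (i) of **Theorem 6**.) If `P = ⟨x, H; R⟩` is a relative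
one-relator presentation whose `x`-skeleton has the unique min property with
respect to an admissible strict weight function, then the natural homomorphism
`ν : H → G(P)` is injective. -/
theorem natHom_injective_of_hasUniqueMin {X H : Type*} [Group H]
    (R : List (X × Bool × H)) (hP : HasUniqueMin (skel R)) :
    Function.Injective (natHom R) := by
  classical
  obtain ⟨θ, hne, hwf, hstrict, hadm, l, hminF, hredF⟩ := hP
  have hlen : (skel R).length = R.length := List.length_map _
  have hlN : l.1 < R.length := by rw [← hlen]; exact l.isLt
  have phiW_eq : ∀ j : ℕ, phiW θ (skel R) j = UMKey.SL θ (R.take j) := by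
    intro j
    rw [phiW, UMKey.SL, skel, ← List.map_take, List.map_map]
    rfl
  have hadm' : UMKey.SL θ R = 0 := by
    have h0 : phiW θ (skel R) (skel R).length = 0 := hadm
    rw [phiW_eq, hlen, List.take_length] at h0
    exact h0
  have hmin' : ∀ j, j < R.length → j ≠ l.1 →
      UMKey.SL θ (R.take (l.1 + 1)) < UMKey.SL θ (R.take (j + 1)) := by
    intro j hj hjne
    have hjF : (⟨j, by rw [hlen]; exact hj⟩ : Fin (skel R).length) ≠ l := by
      intro hc
      exact hjne (by rw [← hc])
    have h := hminF ⟨j, by rw [hlen]; exact hj⟩ hjF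
    rw [phiW_eq, phiW_eq] at h
    exact h
  have hred' : (R[l.1]'hlN).1 ≠ (R[(l.1 + 1) % R.length]'(Nat.mod_lt _ (by omega))).1 := by
    have h := hredF
    simp only [succIdx, List.get_eq_getElem, skel, List.getElem_map, List.length_map] at h
    intro hc; apply h; rw [← hc]
    exact congrArg Prod.fst (List.getElem_map (fun t : X × Bool × H => (t.1, t.2.1)) (l := R) (i := l.1) (h := l.2))
  obtain ⟨hminle, hanchor⟩ := UMKey.key_anchor_min θ R l.1 hlN hstrict hadm' hmin' hred'
  have hL1len : (R.take l.1).length = l.1 := by rw [List.length_take]; omega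
  have hsplit : R.take l.1 ++
      ((R[l.1]'hlN).1, (R[l.1]'hlN).2.1, (R[l.1]'hlN).2.2) :: R.drop (l.1 + 1) = R := by
    rw [show ((R[l.1]'hlN).1, (R[l.1]'hlN).2.1, (R[l.1]'hlN).2.2) = R[l.1]'hlN from rfl,
      ← List.drop_eq_getElem_cons hlN, List.take_append_drop]
  have hmu : UMKey.muv θ (R.take l.1) (R[l.1]'hlN).1 (R[l.1]'hlN).2.1 =
      UMKey.SL θ (R.take (l.1 + 1)) := by
    rw [UMKey.SL_take_succ θ R l.1 hlN]
    rfl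
  have halpha : UMKey.alphaP θ (R.take l.1) (R[l.1]'hlN).1 (R[l.1]'hlN).2.1 =
      if (R[l.1]'hlN).2.1 then UMKey.SL θ (R.take l.1)
      else UMKey.SL θ (R.take (l.1 + 1)) := by
    rw [UMKey.alphaP, hmu]
    simp only [UMKey.phL]
  set A : X → ℤ → H := UMKey.toA (R[l.1]'hlN).1
      (UMKey.Au θ (R.take l.1) (R.drop (l.1 + 1)) (R[l.1]'hlN).1 (R[l.1]'hlN).2.1
        (R[l.1]'hlN).2.2) with hA
  have hev : ∀ m : ℤ, UMKey.ev A θ R 0 m = 1 := by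
    intro m
    have hm := UMKey.master θ (R.take l.1) (R.drop (l.1 + 1)) (R[l.1]'hlN).1 (R[l.1]'hlN).2.1
      (R[l.1]'hlN).2.2
      (by rw [hsplit, hL1len, halpha]; exact hanchor)
      (by rw [hsplit, hmu]; exact hminle) m
    rw [hsplit] at hm
    exact hm
  have hΦrel : Coprod.lift UMKey.embH (FreeGroup.lift (UMKey.ggK A θ)) (relWord R) = 1 := by
    rw [relWord, map_list_prod]
    have hmapeq : List.map (⇑(Coprod.lift UMKey.embH (FreeGroup.lift (UMKey.ggK A θ))))
        (List.map (fun t => Coprod.inr (FreeGroup.mk [(t.1, t.2.1)]) * Coprod.inl t.2.2) R) =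
        List.map (UMKey.stepK A θ) R := by
      rw [List.map_map]
      exact List.map_congr_left (fun T _ => UMKey.Phi_step A θ T)
    rw [hmapeq]
    have h1 : (List.map (UMKey.stepK A θ) R).prod =
        ⟨fun m => (1 : ℤ → H) m * UMKey.ev A θ R 0 m,
          Multiplicative.ofAdd (0 + UMKey.SL θ R)⟩ := by
      rw [← UMKey.prodStep A θ R 0 1, UMKey.mk_one_eq_one, one_mul]
    rw [h1]
    ext m
    · show (1 : ℤ → H) m * UMKey.ev A θ R 0 m = (1 : (ℤ → H) ⋊[UMKey.tau] Multiplicative ℤ).left m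
      rw [hev m]
      simp
    · show Multiplicative.ofAdd (0 + UMKey.SL θ R) = (1 : (ℤ → H) ⋊[UMKey.tau] Multiplicative ℤ).right
      rw [hadm']
      simp
  have hker : Subgroup.normalClosure {relWord R} ≤
      (Coprod.lift UMKey.embH (FreeGroup.lift (UMKey.ggK A θ))).ker := by
    apply Subgroup.normalClosure_le_normal
    intro x hx
    rw [Set.mem_singleton_iff] at hx
    subst hx
    simp only [SetLike.mem_coe, MonoidHom.mem_ker]
    exact hΦrel
  intro a b hab
  apply UMKey.embH_injective
  have hfact : ∀ h : H,
      QuotientGroup.lift _ _ hker (natHom R h) = UMKey.embH h := by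
    intro h
    show QuotientGroup.lift _ _ hker ((QuotientGroup.mk' _) (Coprod.inl h)) = _
    rw [QuotientGroup.mk'_apply, QuotientGroup.lift_mk']
    exact Coprod.lift_apply_inl _ _ h
  rw [← hfact a, ← hfact b, hab]
end
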